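/- arXiv:2207.05125 — 8 statements merged into one kernel-verified Lean document; each statement's English description precedes it below -/
import Mathlib

section
/- For any nonempty open set U of a locally compact second-countable group G and any positive integer ℓ, the collection of closed subsets Λ of G satisfying |Λ ∩ xU| ≤ ℓ for all x ∈ G is closed in the Chabauty–Fell topology on the space of closed subsets of G. -/
open Pointwise Set MeasureTheory Filter Topology
open scoped ENNReal

set_option linter.unusedSectionVars false
set_option linter.unusedVariables false

variable {G : Type*} [TopologicalSpace G] [Group G] [IsTopologicalGroup G]

/-- The space `C(G)` of closed subsets of `G`. -/
def CF (G : Type*) [TopologicalSpace G] := {s : Set G // IsClosed s}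

/-- The subbasis of the Chabauty–Fell topology on `C(G)`: the sets
`O_K = {C | C ∩ K = ∅}` for `K` compact and `O^V = {C | C ∩ V ≠ ∅}` for `V` open. -/
def FellBasis (G : Type*) [TopologicalSpace G] : Set (Set (CF G)) :=
  {U | ∃ K : Set G, IsCompact K ∧ U = {C : CF G | C.1 ∩ K = ∅}} ∪
  {U | ∃ V : Set G, IsOpen V ∧ U = {C : CF G | (C.1 ∩ V).Nonempty}}

/-- The Chabauty–Fell topology. -/
instance : TopologicalSpace (CF G) := TopologicalSpace.generateFrom (FellBasis G)

/-- Left translation of a closed set. -/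
noncomputable def CF.smul (x : G) (C : CF G) : CF G := ⟨x • C.1, C.2.smul x⟩

/-- The hull of a point set `Λ`: the Chabauty–Fell closure of the set of left
translates of `Λ`. -/
def hullSet (Λ : Set G) : Set (CF G) := closure {C : CF G | ∃ x : G, C.1 = x • Λ}

/-- The punctured hull `Ω*(Λ)`: the hull minus the empty set. -/
def phull (Λ : Set G) : Set (CF G) := {C ∈ hullSet Λ | C.1.Nonempty}

/-- The transversal `Ω₀(Λ) = {P ∈ hull : e ∈ P}`. -/
def transv (Λ : Set G) : Set (CF G) := {C ∈ hullSet Λ | (1 : G) ∈ C.1}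

/-- `Λ` is relatively separated: `sup_x |Λ ∩ xU| < ∞` for some nonempty open `U`. -/
def RelSep (Λ : Set G) : Prop :=
  ∃ U : Set G, IsOpen U ∧ U.Nonempty ∧ ∃ ℓ : ℕ, ∀ x : G, (Λ ∩ x • U).encard ≤ ℓ

/-- `Λ` is separated: `|Λ ∩ xU| ≤ 1` for all `x` for some open identity neighborhood. -/
def Separated (Λ : Set G) : Prop :=
  ∃ U : Set G, IsOpen U ∧ (1 : G) ∈ U ∧ ∀ x : G, (Λ ∩ x • U).encard ≤ 1

lemma smul_inter_empty (x : G) (s K : Set G) : (x • s) ∩ K = ∅ ↔ s ∩ (x⁻¹ • K) = ∅ := by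
  have h : (x • s) ∩ K = x • (s ∩ x⁻¹ • K) := by
    rw [Set.smul_set_inter, smul_inv_smul]
  rw [h, Set.smul_set_eq_empty]

lemma smul_inter_nonempty (x : G) (s V : Set G) :
    ((x • s) ∩ V).Nonempty ↔ (s ∩ (x⁻¹ • V)).Nonempty := by
  have h : (x • s) ∩ V = x • (s ∩ x⁻¹ • V) := by
    rw [Set.smul_set_inter, smul_inv_smul]
  rw [h, Set.smul_set_nonempty]

/-- Left translation is continuous for the Chabauty–Fell topology. -/
lemma continuous_CFsmul (x : G) : Continuous (fun C : CF G => CF.smul x C) := by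
  apply continuous_generateFrom_iff.mpr
  rintro U (⟨K, hK, rfl⟩ | ⟨V, hV, rfl⟩)
  · have h : (fun C : CF G => CF.smul x C) ⁻¹' {C : CF G | C.1 ∩ K = ∅}
        = {C : CF G | C.1 ∩ (x⁻¹ • K) = ∅} := by
      ext C; exact smul_inter_empty x C.1 K
    rw [h]
    exact TopologicalSpace.isOpen_generateFrom_of_mem (Or.inl ⟨x⁻¹ • K, hK.smul x⁻¹, rfl⟩)
  · have h : (fun C : CF G => CF.smul x C) ⁻¹' {C : CF G | (C.1 ∩ V).Nonempty}
        = {C : CF G | (C.1 ∩ (x⁻¹ • V)).Nonempty} := by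
      ext C; exact smul_inter_nonempty x C.1 V
    rw [h]
    exact TopologicalSpace.isOpen_generateFrom_of_mem (Or.inr ⟨x⁻¹ • V, hV.smul x⁻¹, rfl⟩)

/-- The hull is invariant under left translations. -/
lemma smul_mem_hullSet {Λ : Set G} {C : CF G} (h : C ∈ hullSet Λ) (x : G) :
    CF.smul x C ∈ hullSet Λ := by
  refine map_mem_closure (continuous_CFsmul x) h ?_
  rintro D ⟨y, hy⟩
  exact ⟨x * y, by simp [CF.smul, hy, mul_smul]⟩

/-- For any nonempty open set `U` of a locally compact second-countable group `G` and any
positive integer `ℓ`, the collection of closed subsets `Λ` of `G` with `|Λ ∩ xU| ≤ ℓ` for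
all `x ∈ G` is closed in the Chabauty–Fell topology. -/
theorem statement0 {G : Type*} [TopologicalSpace G] [Group G] [IsTopologicalGroup G]
    [T2Space G] [LocallyCompactSpace G] [SecondCountableTopology G]
    (U : Set G) (hU : IsOpen U) (hUne : U.Nonempty) (ℓ : ℕ) (hℓ : 0 < ℓ) :
    IsClosed {C : CF G | ∀ x : G, (C.1 ∩ x • U).encard ≤ ℓ} := by
  rw [← isOpen_compl_iff, isOpen_iff_forall_mem_open]
  intro C hC
  simp only [mem_compl_iff, mem_setOf_eq, not_forall, not_le] at hC
  obtain ⟨x, hx⟩ := hC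
  have hle : ((ℓ + 1 : ℕ) : ℕ∞) ≤ (C.1 ∩ x • U).encard := by
    exact_mod_cast Order.add_one_le_of_lt hx
  obtain ⟨t, hts, htcard⟩ := Set.exists_subset_encard_eq hle
  have htfin : t.Finite := Set.finite_of_encard_eq_coe htcard
  obtain ⟨W, hW, hWd⟩ := htfin.t2_separation
  set V : G → Set G := fun p => W p ∩ x • U with hV
  refine ⟨⋂ p ∈ t, {D : CF G | (D.1 ∩ V p).Nonempty}, ?_, ?_, ?_⟩
  · intro D hD
    simp only [mem_iInter, mem_setOf_eq] at hD
    simp only [mem_compl_iff, mem_setOf_eq, not_forall, not_le]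
    refine ⟨x, ?_⟩
    have hd : ∀ p ∈ t, ∃ q, q ∈ D.1 ∩ V p := fun p hp => hD p hp
    choose! d hd using hd
    have hinj : Set.InjOn d t := by
      intro p hp q hq heq
      by_contra hne
      have h1 : d p ∈ W p := ((hd p hp).2).1
      have h2 : d p ∈ W q := heq ▸ ((hd q hq).2).1
      exact (hWd hp hq hne).le_bot ⟨h1, h2⟩ |>.elim
    have himg : d '' t ⊆ D.1 ∩ x • U := by
      rintro _ ⟨p, hp, rfl⟩
      exact ⟨(hd p hp).1, ((hd p hp).2).2⟩
    calc (ℓ : ℕ∞) < ((ℓ + 1 : ℕ) : ℕ∞) := by exact_mod_cast Nat.lt_succ_self ℓ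
      _ = t.encard := htcard.symm
      _ = (d '' t).encard := (hinj.encard_image).symm
      _ ≤ (D.1 ∩ x • U).encard := Set.encard_le_encard himg
  · exact htfin.isOpen_biInter fun p hp =>
      TopologicalSpace.isOpen_generateFrom_of_mem
        (Or.inr ⟨V p, (hW p).2.inter (hU.smul x), rfl⟩)
  · simp only [mem_iInter, mem_setOf_eq]
    intro p hp
    exact ⟨p, ⟨(hts hp).1, (hW p).1, (hts hp).2⟩⟩
end

section
/- Let Λ be an ℓ-relatively U-separated subset of a unimodular locally compact second-countable group G, where U is a symmetric open identity neighborhood and m is a Haar measure. Then for every compact set K ⊆ G and every P in the hull Ω(Λ) (the Chabauty–Fell closure of the set of left translates of Λ), one has |P ∩ K| ≤ ℓ · m(KU)/m(U). -/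
open Pointwise Set MeasureTheory Filter Topology
open scoped ENNReal

set_option linter.unusedSectionVars false
set_option linter.unusedVariables false

variable {G : Type*} [TopologicalSpace G] [Group G] [IsTopologicalGroup G]

open scoped Pointwise in
lemma counting_lemma {G : Type*} [TopologicalSpace G] [Group G] [IsTopologicalGroup G]
    [MeasurableSpace G] [BorelSpace G]
    (m : MeasureTheory.Measure G) [m.IsMulLeftInvariant]
    (t : Finset G) (V T : Set G) (hV : IsOpen V) (hT : MeasurableSet T)
    (hsub : ∀ f ∈ t, f • V ⊆ T) (ℓ : ℕ)
    (hcount : ∀ g : G, ((↑t : Set G) ∩ g • V⁻¹).encard ≤ ℓ) :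
    (t.card : ℝ≥0∞) * m V ≤ (ℓ : ℝ≥0∞) * m T := by
  classical
  have hmeas : ∀ f : G, MeasurableSet (f • V) := fun f => (hV.smul f).measurableSet
  have key : ∀ g : G, (∑ f ∈ t, (f • V).indicator (1 : G → ℝ≥0∞) g)
      ≤ T.indicator (fun _ => (ℓ : ℝ≥0∞)) g := by
    intro g
    have hsum : (∑ f ∈ t, (f • V).indicator (1 : G → ℝ≥0∞) g)
        = ((t.filter (fun f => g ∈ f • V)).card : ℝ≥0∞) := by
      rw [Finset.card_filter]
      push_cast
      refine Finset.sum_congr rfl fun f _ => ?_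
      by_cases h : g ∈ f • V <;> simp [Set.indicator, h]
    rw [hsum]
    by_cases hg : ∃ f ∈ t, g ∈ f • V
    · obtain ⟨f₀, hf₀t, hf₀⟩ := hg
      have hgT : g ∈ T := hsub f₀ hf₀t hf₀
      rw [Set.indicator_of_mem hgT]
      have hss : (↑(t.filter (fun f => g ∈ f • V)) : Set G) ⊆ (↑t : Set G) ∩ g • V⁻¹ := by
        intro f hf
        simp only [Finset.coe_filter, Set.mem_setOf_eq] at hf
        obtain ⟨hft, hgf⟩ := hf
        refine ⟨hft, ?_⟩
        obtain ⟨v, hv, hfv⟩ := hgf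
        refine ⟨v⁻¹, Set.inv_mem_inv.mpr hv, ?_⟩
        simp only [smul_eq_mul] at hfv ⊢
        rw [← hfv]; group
      calc ((t.filter (fun f => g ∈ f • V)).card : ℝ≥0∞)
          = (((↑(t.filter (fun f => g ∈ f • V)) : Set G)).encard : ℝ≥0∞) := by
            rw [Set.encard_coe_eq_coe_finsetCard]; simp
        _ ≤ (((↑t : Set G) ∩ g • V⁻¹).encard : ℝ≥0∞) := by
            exact_mod_cast ENat.toENNReal_le.mpr (Set.encard_mono hss)
        _ ≤ (ℓ : ℝ≥0∞) := by exact_mod_cast ENat.toENNReal_le.mpr (hcount g)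
    · have : t.filter (fun f => g ∈ f • V) = ∅ := by
        refine Finset.filter_eq_empty_iff.mpr fun f hf => ?_
        exact fun h => hg ⟨f, hf, h⟩
      simp [this]
  calc (t.card : ℝ≥0∞) * m V
      = ∑ f ∈ t, m (f • V) := by
        rw [Finset.sum_congr rfl (fun f _ => (MeasureTheory.measure_smul m f V)),
          Finset.sum_const, nsmul_eq_mul]
    _ = ∑ f ∈ t, ∫⁻ g, (f • V).indicator (1 : G → ℝ≥0∞) g ∂m := by
        refine Finset.sum_congr rfl fun f _ => ?_
        rw [MeasureTheory.lintegral_indicator_one (hmeas f)]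
    _ = ∫⁻ g, (∑ f ∈ t, (f • V).indicator (1 : G → ℝ≥0∞) g) ∂m := by
        rw [MeasureTheory.lintegral_finset_sum]
        exact fun f _ => measurable_const.indicator (hmeas f)
    _ ≤ ∫⁻ g, T.indicator (fun _ => (ℓ : ℝ≥0∞)) g ∂m :=
        MeasureTheory.lintegral_mono key
    _ = (ℓ : ℝ≥0∞) * m T := MeasureTheory.lintegral_indicator_const hT _

open scoped Pointwise in
lemma encard_smul_inter_le {G : Type*} [Group G] (Λ U : Set G) (ℓ : ℕ)
    (hΛ : ∀ x : G, (Λ ∩ x • U).encard ≤ ℓ) (x g : G) :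
    ((x • Λ) ∩ g • U).encard ≤ ℓ := by
  have h : x • (Λ ∩ (x⁻¹ * g) • U) = (x • Λ) ∩ g • U := by
    rw [Set.smul_set_inter, smul_smul, mul_inv_cancel_left]
  have h2 : ((x • Λ) ∩ g • U).encard = (Λ ∩ (x⁻¹ * g) • U).encard := by
    rw [← h, ← Set.image_smul, (MulAction.injective (α := G) x).encard_image _]
  rw [h2]; exact hΛ _

/-- Corollary: for an `ℓ`-relatively `U`-separated set `Λ` in a unimodular lcsc group `G`
(`U` a symmetric open precompact identity neighborhood, `m` a Haar measure), every element
`P` of the hull of `Λ` satisfies `|P ∩ K| ≤ ℓ · m(KU)/m(U)` for every compact `K ⊆ G`. -/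
theorem statement3 {G : Type*} [TopologicalSpace G] [Group G] [IsTopologicalGroup G]
    [T2Space G] [LocallyCompactSpace G] [SecondCountableTopology G]
    [MeasurableSpace G] [BorelSpace G]
    (m : Measure G) [m.IsHaarMeasure] [m.IsMulRightInvariant]
    (U : Set G) (hUo : IsOpen U) (hU1 : (1 : G) ∈ U) (hUsymm : U⁻¹ = U)
    (hUc : IsCompact (closure U))
    (Λ : Set G) (ℓ : ℕ) (hΛ : ∀ x : G, (Λ ∩ x • U).encard ≤ ℓ)
    (K : Set G) (hK : IsCompact K) :
    ∀ P ∈ hullSet Λ, ((P.1 ∩ K).encard : ℝ≥0∞) ≤ ℓ * m (K * U) / m U := by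
  classical
  intro P hP
  have hUm0 : m U ≠ 0 := hUo.measure_ne_zero m ⟨1, hU1⟩
  have hUfin : m U ≠ ⊤ :=
    ((measure_mono subset_closure).trans_lt hUc.measure_lt_top).ne
  have hKUfin : m (K * U) ≠ ⊤ :=
    ((measure_mono (Set.mul_subset_mul_left subset_closure)).trans_lt
      (hK.mul hUc).measure_lt_top).ne
  have hKUopen : IsOpen (K * U) := hUo.mul_left
  -- Main finite bound
  have main : ∀ s : Finset G, (↑s : Set G) ⊆ P.1 ∩ K →
      (s.card : ℝ≥0∞) * m U ≤ (ℓ : ℝ≥0∞) * m (K * U) := by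
    intro s hs
    rcases Nat.eq_zero_or_pos s.card with h0 | hpos
    · simp [h0]
    have hcard0 : (s.card : ℝ≥0∞) ≠ 0 := by exact_mod_cast hpos.ne'
    have hcardtop : (s.card : ℝ≥0∞) ≠ ⊤ := ENNReal.natCast_ne_top _
    rw [mul_comm, ← ENNReal.le_div_iff_mul_le (Or.inl hcard0) (Or.inl hcardtop)]
    rw [hUo.measure_eq_iSup_isCompact]
    refine iSup_le fun C => iSup_le fun hCU => iSup_le fun hC => ?_
    rw [ENNReal.le_div_iff_mul_le (Or.inl hcard0) (Or.inl hcardtop), mul_comm]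
    -- goal: s.card * m C ≤ ℓ * m (K * U)
    -- Build a symmetric open V with C ⊆ V, closure V compact ⊆ U
    have hCU' : C ∪ C⁻¹ ⊆ U := by
      refine Set.union_subset hCU ?_
      intro c hc
      rw [← hUsymm, Set.mem_inv]
      exact hCU (Set.mem_inv.mp hc)
    obtain ⟨L, hL, hCL, hLU⟩ := exists_compact_between (hC.union hC.inv) hUo hCU'
    set V : Set G := interior L ∩ (interior L)⁻¹ with hVdef
    have hVo : IsOpen V := isOpen_interior.inter isOpen_interior.inv
    have hCV : C ⊆ V := by
      refine Set.subset_inter ((Set.subset_union_left).trans hCL) ?_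
      intro c hc
      rw [Set.mem_inv]
      exact hCL (Or.inr (by rw [Set.mem_inv, inv_inv]; exact hc))
    have hVsymm : V⁻¹ = V := by
      rw [hVdef, Set.inter_inv, inv_inv, Set.inter_comm]
    have hVL : V ⊆ L := Set.inter_subset_left.trans interior_subset
    have hclVL : closure V ⊆ L := closure_minimal hVL hL.isClosed
    have hclVc : IsCompact (closure V) := hL.of_isClosed_subset isClosed_closure hclVL
    have hclVU : closure V ⊆ U := hclVL.trans hLU
    have hVU : V ⊆ U := subset_closure.trans hclVU
    -- it suffices to bound s.card * m V
    refine le_trans (mul_le_mul_right (measure_mono hCV) _) ?_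
    -- Neighborhood W of 1
    obtain ⟨W₁, hW₁n, hW₁⟩ := compact_open_separated_mul_left hclVc hUo hclVU
    obtain ⟨O₁, hO₁W₁, hO₁o, hO₁1⟩ := mem_nhds_iff.mp hW₁n
    -- disjointness neighborhood
    set D : Finset G := ((s ×ˢ s).filter (fun p => p.1 ≠ p.2)).image (fun p => p.1⁻¹ * p.2)
      with hDdef
    have h1D : (1 : G) ∉ D := by
      intro h1
      obtain ⟨p, hp, hpe⟩ := Finset.mem_image.mp h1
      exact (Finset.mem_filter.mp hp).2 (inv_mul_eq_one.mp hpe)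
    have hDc : (↑D : Set G)ᶜ ∈ 𝓝 (1 : G) := by
      refine IsOpen.mem_nhds ?_ (by simpa using h1D)
      exact (Set.Finite.isClosed (D.finite_toSet)).isOpen_compl
    obtain ⟨W₂, hW₂o, hW₂1, hW₂⟩ := exists_open_nhds_one_mul_subset hDc
    set W : Set G := O₁ ∩ (W₂ ∩ W₂⁻¹) with hWdef
    have hWo : IsOpen W := hO₁o.inter (hW₂o.inter hW₂o.inv)
    have hW1 : (1 : G) ∈ W := ⟨hO₁1, hW₂1, by simpa using hW₂1⟩
    -- Fell neighborhood
    set N : Set (CF G) := ⋂ f ∈ s, {C : CF G | (C.1 ∩ f • W).Nonempty} with hNdef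
    have hNo : IsOpen N := by
      refine isOpen_biInter_finset fun f hf => ?_
      exact TopologicalSpace.isOpen_generateFrom_of_mem (Or.inr ⟨f • W, hWo.smul f, rfl⟩)
    have hPN : P ∈ N := by
      refine Set.mem_iInter₂.mpr fun f hf => ?_
      exact ⟨f, (hs hf).1, by simpa using Set.smul_mem_smul_set (a := f) hW1⟩
    obtain ⟨Q, hQN, x, hQx⟩ := mem_closure_iff.mp hP N hNo hPN
    have hQN' : ∀ f ∈ s, ((x • Λ) ∩ f • W).Nonempty := by
      intro f hf
      have := Set.mem_iInter₂.mp hQN f hf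
      simp only [Set.mem_setOf_eq] at this
      rwa [hQx] at this
    -- pick points
    set lam : G → G := fun f =>
      if h : ((x • Λ) ∩ f • W).Nonempty then h.choose else 1 with hlamdef
    have hlam : ∀ f ∈ s, lam f ∈ (x • Λ) ∩ f • W := by
      intro f hf
      have h := hQN' f hf
      simp only [hlamdef, dif_pos h]
      exact h.choose_spec
    have hinj : Set.InjOn lam (↑s : Set G) := by
      intro f hf f' hf' heq
      by_contra hne
      obtain ⟨-, w, hw, hfw⟩ := hlam f hf
      obtain ⟨-, w', hw', hfw'⟩ := hlam f' hf'
      simp only [smul_eq_mul] at hfw hfw'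
      have hD : f⁻¹ * f' ∈ (↑D : Set G) := by
        refine Finset.mem_coe.mpr (Finset.mem_image.mpr ⟨(f, f'), ?_, rfl⟩)
        exact Finset.mem_filter.mpr ⟨Finset.mem_product.mpr ⟨hf, hf'⟩, hne⟩
      have hmul : f⁻¹ * f' = w * w'⁻¹ := by
        have h1 : f * w = f' * w' := by
          rw [hfw, hfw', heq]
        have := congrArg (fun z => f⁻¹ * z * w'⁻¹) h1
        simpa [mul_assoc] using this.symm
      have hwW₂ : w ∈ W₂ := hw.2.1
      have hw'W₂ : w'⁻¹ ∈ W₂ := hw'.2.2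
      have : f⁻¹ * f' ∈ W₂ * W₂ := by
        rw [hmul]; exact Set.mul_mem_mul hwW₂ hw'W₂
      exact (hW₂ this) hD
    set t : Finset G := s.image lam with htdef
    have htcard : t.card = s.card := Finset.card_image_of_injOn hinj
    have hWV : W * V ⊆ U := by
      intro z hz
      obtain ⟨a, ha, b, hb, rfl⟩ := hz
      exact hW₁ (Set.mul_mem_mul (hO₁W₁ ha.1) (subset_closure hb))
    have hbound := counting_lemma m t V (K * U) hVo hKUopen.measurableSet
      (by
        intro f' hf'
        obtain ⟨f, hf, rfl⟩ := Finset.mem_image.mp hf'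
        obtain ⟨-, w, hw, hfw⟩ := hlam f hf
        simp only [smul_eq_mul] at hfw
        intro z hz
        obtain ⟨v, hv, rfl⟩ := hz
        simp only [smul_eq_mul]
        rw [← hfw, mul_assoc]
        exact Set.mul_mem_mul (hs hf).2 (hWV (Set.mul_mem_mul hw hv)))
      ℓ
      (by
        intro g
        refine le_trans (Set.encard_mono ?_) (encard_smul_inter_le Λ U ℓ hΛ x g)
        refine Set.inter_subset_inter ?_ ?_
        · intro f' hf'
          obtain ⟨f, hf, rfl⟩ := Finset.mem_image.mp hf'
          exact (hlam f hf).1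
        · rw [hVsymm]
          exact Set.smul_set_mono hVU)
    rw [htcard] at hbound
    exact hbound
  -- conclude from the finite bound
  have hfin : (P.1 ∩ K).Finite := by
    by_contra hinf
    have hfr : (ℓ : ℝ≥0∞) * m (K * U) / m U ≠ ⊤ := (by
        intro h
        rcases ENNReal.div_eq_top.mp h with ⟨_, h2⟩ | ⟨h1, _⟩
        · exact hUm0 h2
        · exact (ENNReal.mul_eq_top.mp h1).elim
            (fun h => hKUfin h.2) (fun h => ENNReal.natCast_ne_top ℓ h.1))
    obtain ⟨n, hn⟩ := ENNReal.exists_nat_gt hfr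
    obtain ⟨sn, hsn, hsncard⟩ := Set.Infinite.exists_subset_card_eq hinf n
    have := main sn hsn
    rw [hsncard, ← ENNReal.le_div_iff_mul_le (Or.inl hUm0) (Or.inl hUfin)] at this
    exact hn.not_ge this
  rw [ENNReal.le_div_iff_mul_le (Or.inl hUm0) (Or.inl hUfin)]
  have henc : (P.1 ∩ K).encard = (hfin.toFinset.card : ℕ∞) := by
    rw [← Set.encard_coe_eq_coe_finsetCard, hfin.coe_toFinset]
  rw [henc]
  have := main hfin.toFinset (by rw [hfin.coe_toFinset])
  simpa using this
end

section
/- If Γ is a lattice in a unimodular locally compact second-countable group G, then the punctured hull of Γ equals the set {xΓ : x ∈ G} of left translates of Γ, and the punctured hull is homeomorphic as a G-space to the quotient G/Γ. -/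
open Pointwise Set MeasureTheory Filter Topology
open scoped ENNReal

set_option linter.unusedSectionVars false
set_option linter.unusedVariables false

variable {G : Type*} [TopologicalSpace G] [Group G] [IsTopologicalGroup G]

section Aux

variable (Γ : Subgroup G)

lemma aux_self_mem_smul (x : G) : x ∈ x • (Γ : Set G) :=
  Set.mem_smul_set.mpr ⟨1, Γ.one_mem, mul_one x⟩

lemma aux_mem_smul_iff {x p : G} : p ∈ x • (Γ : Set G) ↔ ∃ γ ∈ Γ, x * γ = p := by
  simp only [Set.mem_smul_set, smul_eq_mul, SetLike.mem_coe]

lemma aux_smul_eq_of_mem {x p : G} (hp : p ∈ x • (Γ : Set G)) :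
    p • (Γ : Set G) = x • (Γ : Set G) := by
  obtain ⟨γ, hγ, rfl⟩ := (aux_mem_smul_iff Γ).mp hp
  rw [mul_smul, smul_coe_set (SetLike.mem_coe.mpr hγ)]

lemma aux_orbit_inter_nonempty (V : Set G) (x : G) :
    ((x • (Γ : Set G)) ∩ V).Nonempty ↔ x ∈ V * (Γ : Set G) := by
  constructor
  · rintro ⟨p, hp, hpV⟩
    obtain ⟨γ, hγ, rfl⟩ := (aux_mem_smul_iff Γ).mp hp
    exact ⟨x * γ, hpV, γ⁻¹, Γ.inv_mem hγ, by group⟩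
  · rintro ⟨v, hv, γ, hγ, rfl⟩
    exact ⟨v * γ * γ⁻¹, (aux_mem_smul_iff Γ).mpr ⟨γ⁻¹, Γ.inv_mem hγ, rfl⟩, by simpa using hv⟩

/-- The orbit map `x ↦ xΓ` into the Chabauty–Fell space. -/
noncomputable def orbitCF (hΓ : IsClosed (Γ : Set G)) : G → CF G :=
  fun x => ⟨x • (Γ : Set G), hΓ.smul x⟩

variable [T2Space G]

/-- The orbit map `x ↦ xΓ` is continuous into the Chabauty–Fell space. -/
lemma aux_orbitMap_continuous (hΓ : IsClosed (Γ : Set G)) :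
    Continuous (orbitCF Γ hΓ) := by
  apply continuous_generateFrom_iff.mpr
  rintro U (⟨K, hK, rfl⟩ | ⟨V, hV, rfl⟩)
  · have h : orbitCF Γ hΓ ⁻¹' {C : CF G | C.1 ∩ K = ∅} = (K * (Γ : Set G))ᶜ := by
      ext x
      simp only [Set.mem_preimage, Set.mem_setOf_eq, Set.mem_compl_iff, orbitCF,
        ← Set.not_nonempty_iff_eq_empty, aux_orbit_inter_nonempty Γ K x]
      exact (aux_orbit_inter_nonempty Γ K x).not
    rw [h]
    exact (hΓ.mul_left_of_isCompact hK).isOpen_compl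
  · have h : orbitCF Γ hΓ ⁻¹' {C : CF G | (C.1 ∩ V).Nonempty} = V * (Γ : Set G) := by
      ext x
      simp only [Set.mem_preimage, Set.mem_setOf_eq, orbitCF,
        aux_orbit_inter_nonempty Γ V x]
      exact aux_orbit_inter_nonempty Γ V x
    rw [h]
    exact hV.mul_right

variable [LocallyCompactSpace G]

/-- The punctured hull of a closed subgroup is exactly its set of left translates. -/
lemma aux_phull_eq (hΓ : IsClosed (Γ : Set G)) :
    phull (Γ : Set G) = {C : CF G | ∃ x : G, C.1 = x • (Γ : Set G)} := by
  ext C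
  constructor
  · rintro ⟨hC, c, hc⟩
    refine ⟨c, Set.Subset.antisymm ?_ ?_⟩
    · -- C ⊆ cΓ
      intro d hd
      by_contra hdc
      obtain ⟨K, hK, hdK, hKsub⟩ :=
        exists_compact_subset (hΓ.smul c).isOpen_compl hdc
      have hcKΓ : c ∉ K * (Γ : Set G) := by
        rintro ⟨k, hk, γ, hγ, rfl⟩
        refine hKsub hk ((aux_mem_smul_iff Γ).mpr ⟨γ⁻¹, Γ.inv_mem hγ, by group⟩)
      have hKΓclosed : IsClosed (K * (Γ : Set G)) := hΓ.mul_left_of_isCompact hK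
      have hNopen : IsOpen ({D : CF G | (D.1 ∩ (K * (Γ : Set G))ᶜ).Nonempty} ∩
          {D : CF G | (D.1 ∩ interior K).Nonempty}) :=
        (TopologicalSpace.isOpen_generateFrom_of_mem
          (Or.inr ⟨(K * (Γ : Set G))ᶜ, hKΓclosed.isOpen_compl, rfl⟩)).inter
        (TopologicalSpace.isOpen_generateFrom_of_mem
          (Or.inr ⟨interior K, isOpen_interior, rfl⟩))
      have hCN : C ∈ ({D : CF G | (D.1 ∩ (K * (Γ : Set G))ᶜ).Nonempty} ∩
          {D : CF G | (D.1 ∩ interior K).Nonempty}) := ⟨⟨c, hc, hcKΓ⟩, ⟨d, hd, hdK⟩⟩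
      obtain ⟨D, ⟨hD1, hD2⟩, x, hDx⟩ := mem_closure_iff.mp hC _ hNopen hCN
      obtain ⟨p, hp, hpV⟩ := hD1
      obtain ⟨q, hq, hqK⟩ := hD2
      rw [hDx] at hp hq
      obtain ⟨γ₁, hγ₁, rfl⟩ := (aux_mem_smul_iff Γ).mp hp
      obtain ⟨γ₂, hγ₂, rfl⟩ := (aux_mem_smul_iff Γ).mp hq
      exact hpV ⟨x * γ₂, interior_subset hqK, γ₂⁻¹ * γ₁,
        Γ.mul_mem (Γ.inv_mem hγ₂) hγ₁, by group⟩
    · -- cΓ ⊆ C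
      intro p hp
      obtain ⟨γ, hγ, rfl⟩ := (aux_mem_smul_iff Γ).mp hp
      by_contra hpc
      obtain ⟨K, hK, hpK, hKsub⟩ := exists_compact_subset C.2.isOpen_compl hpc
      have hVopen : IsOpen ((fun v => v * γ) ⁻¹' interior K) :=
        isOpen_interior.preimage (continuous_mul_right γ)
      have hNopen : IsOpen ({D : CF G | D.1 ∩ K = ∅} ∩
          {D : CF G | (D.1 ∩ ((fun v => v * γ) ⁻¹' interior K)).Nonempty}) :=
        (TopologicalSpace.isOpen_generateFrom_of_mem (Or.inl ⟨K, hK, rfl⟩)).inter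
        (TopologicalSpace.isOpen_generateFrom_of_mem
          (Or.inr ⟨(fun v => v * γ) ⁻¹' interior K, hVopen, rfl⟩))
      have hCN : C ∈ ({D : CF G | D.1 ∩ K = ∅} ∩
          {D : CF G | (D.1 ∩ ((fun v => v * γ) ⁻¹' interior K)).Nonempty}) := by
        refine ⟨Set.eq_empty_iff_forall_notMem.mpr fun y hy => hKsub hy.2 hy.1, ⟨c, hc, ?_⟩⟩
        simpa using hpK
      obtain ⟨D, ⟨hD1, hD2⟩, x, hDx⟩ := mem_closure_iff.mp hC _ hNopen hCN
      obtain ⟨q, hq, hqV⟩ := hD2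
      rw [hDx] at hq
      obtain ⟨γ₁, hγ₁, rfl⟩ := (aux_mem_smul_iff Γ).mp hq
      have hmem : x * γ₁ * γ ∈ D.1 ∩ K := by
        refine ⟨?_, interior_subset hqV⟩
        rw [hDx]
        exact (aux_mem_smul_iff Γ).mpr ⟨γ₁ * γ, Γ.mul_mem hγ₁ hγ, (mul_assoc x γ₁ γ).symm⟩
      rw [hD1] at hmem
      exact hmem
  · rintro ⟨x, hx⟩
    exact ⟨subset_closure ⟨x, hx⟩, by rw [hx]; exact ⟨x, aux_self_mem_smul Γ x⟩⟩

end Aux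

/-- If `Γ` is a lattice in a unimodular lcsc group `G` (a discrete subgroup of finite
covolume), then the punctured hull of `Γ` equals the set of left translates of `Γ`, and the
punctured hull is `G`-equivariantly homeomorphic to `G ⧸ Γ` (equivariance being encoded by
the requirement that the coset `xΓ` is sent to the translate `x • Γ`). -/
theorem statement4 {G : Type*} [TopologicalSpace G] [Group G] [IsTopologicalGroup G]
    [T2Space G] [LocallyCompactSpace G] [SecondCountableTopology G]
    [MeasurableSpace G] [BorelSpace G]
    (m : Measure G) [m.IsHaarMeasure] [m.IsMulRightInvariant]
    (Γ : Subgroup G) [DiscreteTopology Γ]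
    (hcovol : ∃ 𝓕 : Set G, MeasurableSet 𝓕 ∧ IsFundamentalDomain Γ.op 𝓕 m ∧ m 𝓕 < ⊤) :
    phull (Γ : Set G) = {C : CF G | ∃ x : G, C.1 = x • (Γ : Set G)} ∧
    ∃ φ : (G ⧸ Γ) ≃ₜ ↥(phull (Γ : Set G)),
      ∀ x : G, ((φ (x : G ⧸ Γ)) : CF G).1 = x • (Γ : Set G) := by
  have hΓ : IsClosed (Γ : Set G) := Subgroup.isClosed_of_discrete
  have hPE := aux_phull_eq Γ hΓ
  refine ⟨hPE, ?_⟩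
  -- the orbit map into the punctured hull
  set g : G → ↥(phull (Γ : Set G)) := fun x =>
    ⟨orbitCF Γ hΓ x, by rw [hPE]; exact ⟨x, rfl⟩⟩ with hg
  have hg_cont : Continuous g := (aux_orbitMap_continuous Γ hΓ).subtype_mk _
  have hresp : ∀ x y : G, @Setoid.r G (QuotientGroup.leftRel Γ) x y → g x = g y := by
    intro x y hxy
    have hxy' : x⁻¹ * y ∈ Γ := (QuotientGroup.leftRel_apply).mp hxy
    have : x • (Γ : Set G) = y • (Γ : Set G) := by
      have := aux_smul_eq_of_mem Γ (x := x)
        (p := y) ((aux_mem_smul_iff Γ).mpr ⟨x⁻¹ * y, hxy', by group⟩)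
      exact this.symm
    exact Subtype.ext (Subtype.ext this)
  set φ0 : G ⧸ Γ → ↥(phull (Γ : Set G)) :=
    fun q => Quotient.liftOn' q g hresp with hφ0
  have hφ0_mk : ∀ x : G, φ0 (x : G ⧸ Γ) = g x := fun x => rfl
  have hφ0_cont : Continuous φ0 := hg_cont.quotient_liftOn' hresp
  have hφ0_bij : Function.Bijective φ0 := by
    constructor
    · intro q₁ q₂ h
      obtain ⟨x, rfl⟩ := QuotientGroup.mk_surjective q₁
      obtain ⟨y, rfl⟩ := QuotientGroup.mk_surjective q₂
      have hsets : x • (Γ : Set G) = y • (Γ : Set G) :=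
        Subtype.ext_iff.mp (Subtype.ext_iff.mp h)
      have hx : x ∈ y • (Γ : Set G) := hsets ▸ aux_self_mem_smul Γ x
      obtain ⟨γ, hγ, hxy⟩ := (aux_mem_smul_iff Γ).mp hx
      refine (QuotientGroup.eq).mpr ?_
      have hγ' : x⁻¹ * y = γ⁻¹ := by rw [← hxy]; group
      rw [hγ']
      exact Γ.inv_mem hγ
    · rintro ⟨D, hD⟩
      rw [hPE] at hD
      obtain ⟨x, hx⟩ := hD
      exact ⟨(x : G ⧸ Γ), Subtype.ext (Subtype.ext hx.symm)⟩
  have hφ0_open : IsOpenMap φ0 := by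
    intro O hO
    set U : Set G := QuotientGroup.mk ⁻¹' O with hU
    have hUopen : IsOpen U := hO.preimage continuous_quotient_mk'
    have himg : φ0 '' O = Subtype.val ⁻¹' {C : CF G | (C.1 ∩ U).Nonempty} := by
      ext D
      constructor
      · rintro ⟨q, hq, rfl⟩
        obtain ⟨x, rfl⟩ := QuotientGroup.mk_surjective q
        exact ⟨x, aux_self_mem_smul Γ x, hq⟩
      · rintro ⟨p, hp, hpU⟩
        obtain ⟨x, hx⟩ := (Set.ext_iff.mp hPE (D : CF G)).mp D.2
        have hpD : p ∈ x • (Γ : Set G) := hx ▸ hp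
        have : (D : CF G).1 = p • (Γ : Set G) := by
          rw [hx, aux_smul_eq_of_mem Γ hpD]
        exact ⟨(p : G ⧸ Γ), hpU, Subtype.ext (Subtype.ext this.symm)⟩
    rw [himg]
    exact (TopologicalSpace.isOpen_generateFrom_of_mem
      (Or.inr ⟨U, hUopen, rfl⟩)).preimage continuous_subtype_val
  refine ⟨Equiv.toHomeomorphOfContinuousOpen
    (Equiv.ofBijective φ0 hφ0_bij) hφ0_cont hφ0_open, ?_⟩
  intro x
  rfl
end

section
/- Let U and V be open subsets of a locally compact second-countable group G with V⁻¹V ⊆ U, and let Λ ⊆ G be U-separated (i.e., |Λ ∩ xU| ≤ 1 for all x ∈ G). Then the map (x, P) ↦ xP from V × Ω₀(Λ) into the hull of Λ is a homeomorphism onto its image, where Ω₀(Λ) = {P in the hull of Λ : e ∈ P} is the transversal. -/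
open Pointwise Set MeasureTheory Filter Topology
open scoped ENNReal

set_option linter.unusedSectionVars false
set_option linter.unusedVariables false

variable {G : Type*} [TopologicalSpace G] [Group G] [IsTopologicalGroup G]

/-- Joint continuity of the translation action on `CF G`. -/
lemma continuous_smul_pair [LocallyCompactSpace G] :
    Continuous (fun p : G × CF G => CF.smul p.1 p.2) := by
  apply continuous_generateFrom_iff.mpr
  rintro W (⟨K, hK, rfl⟩ | ⟨O, hO, rfl⟩)
  · rw [isOpen_iff_mem_nhds]
    rintro ⟨x₀, C₀⟩ hp
    have hp' : C₀.1 ∩ x₀⁻¹ • K = ∅ :=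
      (smul_inter_empty x₀ C₀.1 K).mp (by exact hp)
    have hKsub : x₀⁻¹ • K ⊆ (C₀.1)ᶜ := by
      intro y hy
      intro hyC
      have : y ∈ C₀.1 ∩ x₀⁻¹ • K := ⟨hyC, hy⟩
      simp [hp'] at this
    obtain ⟨L, hL, hKL, hLsub⟩ :=
      exists_compact_between (hK.smul x₀⁻¹) C₀.2.isOpen_compl hKsub
    obtain ⟨W', hW', hWK⟩ :=
      compact_open_separated_mul_left (hK.smul x₀⁻¹) isOpen_interior hKL
    have hN : {x : G | x⁻¹ * x₀ ∈ W'} ∈ 𝓝 x₀ := by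
      have hc : ContinuousAt (fun x : G => x⁻¹ * x₀) x₀ :=
        ((continuous_inv.mul continuous_const)).continuousAt
      have : (fun x : G => x⁻¹ * x₀) x₀ = 1 := by simp
      exact hc.preimage_mem_nhds (by simpa using hW')
    have hO2 : IsOpen {C : CF G | C.1 ∩ L = ∅} :=
      TopologicalSpace.isOpen_generateFrom_of_mem (Or.inl ⟨L, hL, rfl⟩)
    have hC₀2 : C₀ ∈ {C : CF G | C.1 ∩ L = ∅} := by
      have : C₀.1 ∩ L ⊆ C₀.1 ∩ (C₀.1)ᶜ := inter_subset_inter_right _ hLsub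
      simpa using eq_empty_of_subset_empty (by simpa using this)
    refine Filter.mem_of_superset
      (prod_mem_nhds hN (hO2.mem_nhds hC₀2)) ?_
    rintro ⟨x, C⟩ ⟨hx, hC⟩
    show (CF.smul x C).1 ∩ K = ∅
    rw [show (CF.smul x C).1 = x • C.1 from rfl, smul_inter_empty]
    have hsub : x⁻¹ • K ⊆ L := by
      have : x⁻¹ • K = (x⁻¹ * x₀) • (x₀⁻¹ • K) := by
        rw [smul_smul]; congr 1; group
      rw [this]
      refine subset_trans ?_ interior_subset
      refine subset_trans ?_ hWK
      exact smul_set_subset_mul hx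
    exact eq_empty_of_subset_empty
      (by calc C.1 ∩ x⁻¹ • K ⊆ C.1 ∩ L := inter_subset_inter_right _ hsub
            _ = ∅ := hC)
  · rw [isOpen_iff_mem_nhds]
    rintro ⟨x₀, C₀⟩ hp
    have hp' : (C₀.1 ∩ x₀⁻¹ • O).Nonempty :=
      (smul_inter_nonempty x₀ C₀.1 O).mp (by exact hp)
    obtain ⟨c, hcC, hcO⟩ := hp'
    have hxc : x₀ * c ∈ O := by
      rwa [Set.mem_smul_set_iff_inv_smul_mem, inv_inv, smul_eq_mul] at hcO
    have hcont : ContinuousAt (fun q : G × G => q.1 * q.2) (x₀, c) :=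
      continuous_mul.continuousAt
    have hmem : (fun q : G × G => q.1 * q.2) ⁻¹' O ∈ 𝓝 (x₀, c) :=
      hcont.preimage_mem_nhds (hO.mem_nhds hxc)
    rw [mem_nhds_prod_iff] at hmem
    obtain ⟨N, hN, O', hO', hNO⟩ := hmem
    obtain ⟨O'', hO''sub, hO''open, hcO''⟩ := mem_nhds_iff.mp hO'
    have hOopen : IsOpen {C : CF G | (C.1 ∩ O'').Nonempty} :=
      TopologicalSpace.isOpen_generateFrom_of_mem (Or.inr ⟨O'', hO''open, rfl⟩)
    refine Filter.mem_of_superset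
      (prod_mem_nhds hN (hOopen.mem_nhds ⟨c, hcC, hcO''⟩)) ?_
    rintro ⟨x, C⟩ ⟨hx, c', hc'C, hc'O⟩
    show ((CF.smul x C).1 ∩ O).Nonempty
    rw [show (CF.smul x C).1 = x • C.1 from rfl, smul_inter_nonempty]
    refine ⟨c', hc'C, ?_⟩
    rw [Set.mem_smul_set_iff_inv_smul_mem, inv_inv, smul_eq_mul]
    exact hNO (Set.mk_mem_prod hx (hO''sub hc'O))

/-- Elements of the hull inherit the separation property. -/
lemma hull_separated [T2Space G] {Λ U : Set G} (hUo : IsOpen U)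
    (hΛ : ∀ x : G, (Λ ∩ x • U).encard ≤ 1) :
    ∀ C ∈ hullSet Λ, ∀ z : G, (C.1 ∩ z • U).encard ≤ 1 := by
  intro C hC z
  rw [Set.encard_le_one_iff]
  intro a b ha hb
  by_contra hab
  obtain ⟨u, v, hu, hv, hau, hbv, huv⟩ := t2_separation hab
  set W₁ := u ∩ z • U with hW₁
  set W₂ := v ∩ z • U with hW₂
  have hOopen : IsOpen ({C : CF G | (C.1 ∩ W₁).Nonempty} ∩
      {C : CF G | (C.1 ∩ W₂).Nonempty}) :=
    (TopologicalSpace.isOpen_generateFrom_of_mem (Or.inr ⟨W₁, hu.inter (hUo.smul z), rfl⟩)).inter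
      (TopologicalSpace.isOpen_generateFrom_of_mem (Or.inr ⟨W₂, hv.inter (hUo.smul z), rfl⟩))
  have hCmem : C ∈ {C : CF G | (C.1 ∩ W₁).Nonempty} ∩ {C : CF G | (C.1 ∩ W₂).Nonempty} :=
    ⟨⟨a, ha.1, hau, ha.2⟩, ⟨b, hb.1, hbv, hb.2⟩⟩
  obtain ⟨D, ⟨⟨c₁, hc₁D, hc₁W⟩, ⟨c₂, hc₂D, hc₂W⟩⟩, y, hD⟩ :=
    mem_closure_iff.mp hC _ hOopen hCmem
  have hne : c₁ ≠ c₂ := by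
    intro h
    exact (Set.disjoint_iff.mp huv ⟨hc₁W.1, h ▸ hc₂W.1⟩)
  have hcard : ((y • Λ) ∩ z • U).encard ≤ 1 := by
    have heq : (y • Λ) ∩ z • U = y • (Λ ∩ (y⁻¹ * z) • U) := by
      rw [Set.smul_set_inter, smul_smul]
      congr 2
      group
    rw [heq]
    have : (y • (Λ ∩ (y⁻¹ * z) • U)).encard = (Λ ∩ (y⁻¹ * z) • U).encard := by
      rw [show y • (Λ ∩ (y⁻¹ * z) • U) = (fun t => y * t) '' (Λ ∩ (y⁻¹ * z) • U) from rfl]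
      exact Function.Injective.encard_image (mul_right_injective y) _
    rw [this]
    exact hΛ _
  have h2 : 1 < ((y • Λ) ∩ z • U).encard := by
    rw [Set.one_lt_encard_iff]
    exact ⟨c₁, c₂, ⟨hD ▸ hc₁D, hc₁W.2⟩, ⟨hD ▸ hc₂D, hc₂W.2⟩, hne⟩
  exact absurd (h2.trans_le hcard) (lt_irrefl _)

/-- A hull element meets `V` in at most one point. -/
lemma hull_unique_in_V [T2Space G] {Λ U V : Set G} (hUo : IsOpen U) (hVU : V⁻¹ * V ⊆ U)
    (hΛ : ∀ x : G, (Λ ∩ x • U).encard ≤ 1)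
    {C : CF G} (hC : C ∈ hullSet Λ) {a b : G}
    (ha : a ∈ C.1 ∩ V) (hb : b ∈ C.1 ∩ V) : a = b := by
  have hsep := hull_separated hUo hΛ C hC b
  rw [Set.encard_le_one_iff] at hsep
  refine hsep a b ⟨ha.1, ?_⟩ ⟨hb.1, ?_⟩
  · rw [Set.mem_smul_set_iff_inv_smul_mem, smul_eq_mul]
    exact hVU (Set.mul_mem_mul (Set.inv_mem_inv.mpr hb.2) ha.2)
  · rw [Set.mem_smul_set_iff_inv_smul_mem, smul_eq_mul]
    exact hVU (Set.mul_mem_mul (Set.inv_mem_inv.mpr hb.2) hb.2)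

/-- Let `U, V` be open in `G` with `V⁻¹V ⊆ U` and let `Λ` be `U`-separated. Then the map
`(x, P) ↦ xP` from `V × Ω₀(Λ)` into the hull of `Λ` is a homeomorphism onto its image
(i.e. a topological embedding). -/
theorem statement5 {G : Type*} [TopologicalSpace G] [Group G] [IsTopologicalGroup G]
    [T2Space G] [LocallyCompactSpace G] [SecondCountableTopology G]
    (U V : Set G) (hU : IsOpen U) (hV : IsOpen V) (hVU : V⁻¹ * V ⊆ U)
    (Λ : Set G) (hΛ : ∀ x : G, (Λ ∩ x • U).encard ≤ 1) :
    Topology.IsEmbedding (fun p : ↥V × ↥(transv Λ) =>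
      (⟨CF.smul (↑p.1) (↑p.2), smul_mem_hullSet p.2.2.1 ↑p.1⟩ : ↥(hullSet Λ))) := by
  classical
  set f : ↥V × ↥(transv Λ) → ↥(hullSet Λ) := fun p =>
    (⟨CF.smul (↑p.1) (↑p.2), smul_mem_hullSet p.2.2.1 ↑p.1⟩ : ↥(hullSet Λ)) with hfdef
  have hptf : ∀ p : ↥V × ↥(transv Λ), (p.1 : G) ∈ (f p).1.1 ∩ V := by
    intro p
    refine ⟨?_, p.1.2⟩
    have h1 : (1 : G) ∈ (p.2.1).1 := p.2.2.2
    have := Set.smul_mem_smul_set (a := ((p.1 : G) : G)) h1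
    exact (by simpa using this : (p.1 : G) ∈ (p.1 : G) • (p.2.1).1)
  have huniq : ∀ C : CF G, C ∈ hullSet Λ → ∀ a b : G,
      a ∈ C.1 ∩ V → b ∈ C.1 ∩ V → a = b :=
    fun C hC a b ha hb => hull_unique_in_V hU hVU hΛ hC ha hb
  have hcontf : Continuous f := by
    apply Continuous.subtype_mk
    exact continuous_smul_pair.comp
      ((continuous_subtype_val.comp continuous_fst).prodMk
        (continuous_subtype_val.comp continuous_snd))
  set f' : ↥V × ↥(transv Λ) → ↥(Set.range f) := fun p => ⟨f p, Set.mem_range_self p⟩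
    with hf'def
  have hne : ∀ C : ↥(Set.range f), (C.1.1.1 ∩ V).Nonempty := by
    intro C
    obtain ⟨p, hp⟩ := C.2
    exact ⟨p.1, by rw [← hp]; exact hptf p⟩
  set xc : ↥(Set.range f) → G := fun C => (hne C).choose with hxcdef
  have hxc : ∀ C, xc C ∈ C.1.1.1 ∩ V := fun C => (hne C).choose_spec
  have hxccont : Continuous xc := by
    rw [continuous_iff_continuousAt]
    intro C
    rw [ContinuousAt, tendsto_nhds]
    intro O hO hxO
    have hopen : IsOpen {D : CF G | (D.1 ∩ (O ∩ V)).Nonempty} :=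
      TopologicalSpace.isOpen_generateFrom_of_mem (Or.inr ⟨O ∩ V, hO.inter hV, rfl⟩)
    have hpre : IsOpen ((fun D : ↥(Set.range f) => (D.1 : CF G)) ⁻¹'
        {D : CF G | (D.1 ∩ (O ∩ V)).Nonempty}) :=
      hopen.preimage (continuous_subtype_val.comp continuous_subtype_val)
    refine Filter.mem_of_superset (hpre.mem_nhds ?_) ?_
    · exact ⟨xc C, (hxc C).1, hxO, (hxc C).2⟩
    · rintro D ⟨y, hyD, hyO, hyV⟩
      have heq := huniq (D.1 : CF G) D.1.2 y (xc D) ⟨hyD, hyV⟩ (hxc D)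
      show xc D ∈ O
      rwa [← heq]
  have htr : ∀ C : ↥(Set.range f), CF.smul (xc C)⁻¹ (C.1 : CF G) ∈ transv Λ := by
    intro C
    refine ⟨smul_mem_hullSet C.1.2 _, ?_⟩
    show (1 : G) ∈ (xc C)⁻¹ • C.1.1.1
    rw [Set.mem_smul_set_iff_inv_smul_mem, inv_inv, smul_eq_mul, mul_one]
    exact (hxc C).1
  set g : ↥(Set.range f) → ↥V × ↥(transv Λ) := fun C =>
    (⟨xc C, (hxc C).2⟩, ⟨CF.smul (xc C)⁻¹ (C.1 : CF G), htr C⟩) with hgdef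
  have hgcont : Continuous g := by
    refine Continuous.prodMk (hxccont.subtype_mk _) (Continuous.subtype_mk ?_ _)
    exact continuous_smul_pair.comp
      (hxccont.inv.prodMk (continuous_subtype_val.comp continuous_subtype_val))
  have hgf : ∀ p, g (f' p) = p := by
    intro p
    have hx : xc (f' p) = (p.1 : G) :=
      huniq (f p).1 (f p).2 _ _ (hxc (f' p)) (hptf p)
    refine Prod.ext (Subtype.ext hx) (Subtype.ext (Subtype.ext ?_))
    show (xc (f' p))⁻¹ • ((p.1 : G) • (p.2.1).1) = (p.2.1).1
    rw [hx, inv_smul_smul]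
  have hid : g ∘ f' = id := funext hgf
  have hcontf' : Continuous f' := hcontf.subtype_mk _
  have hindf' : Topology.IsInducing f' := by
    refine Topology.IsInducing.of_comp hcontf' hgcont ?_
    rw [hid]; exact Topology.IsInducing.id
  have hind : Topology.IsInducing f :=
    Topology.IsInducing.subtypeVal.comp hindf'
  have hinj : Function.Injective f :=
    Function.Injective.comp Subtype.val_injective (Function.LeftInverse.injective hgf)
  exact ⟨hind, hinj⟩
end

section
/- The transversal Ω₀(Λ) = {P ∈ Ω*(Λ) : e ∈ P} is an abstract transversal for the transformation groupoid G ⋉ Ω*(Λ): it is closed, meets every orbit of the action, and with Z = {(x,P) : x⁻¹ ∈ P, P ∈ Ω*(Λ)}, the restricted source map Z → Ω*(Λ) and restricted range map Z → Ω₀(Λ) are open maps. -/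
open Pointwise Set MeasureTheory Filter Topology
open scoped ENNReal

set_option linter.unusedSectionVars false
set_option linter.unusedVariables false

variable {G : Type*} [TopologicalSpace G] [Group G] [IsTopologicalGroup G]

lemma one_mem_smul {G : Type*} [TopologicalSpace G] [Group G] [IsTopologicalGroup G]
    {x : G} {s : Set G} (h : x⁻¹ ∈ s) : (1 : G) ∈ x • s :=
  Set.mem_smul_set.mpr ⟨x⁻¹, h, by simp⟩

/-- The groupoid `G(Λ)` of a point set: pairs `(x, P)` with `P` in the transversal and
`x⁻¹ ∈ P` (so that both `P` and `xP` contain the identity). -/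
def Deloid {G : Type*} [TopologicalSpace G] [Group G] [IsTopologicalGroup G] (Λ : Set G) :
    Set (G × CF G) :=
  {p | p.2 ∈ transv Λ ∧ (p.1)⁻¹ ∈ p.2.1}

/-- The source map of the groupoid `G(Λ)`: `s(x, P) = P`. -/
def deloidSource {G : Type*} [TopologicalSpace G] [Group G] [IsTopologicalGroup G] (Λ : Set G)
    (p : ↥(Deloid Λ)) : ↥(transv Λ) := ⟨p.1.2, p.2.1⟩

/-- The range map of the groupoid `G(Λ)`: `r(x, P) = xP`. -/
noncomputable def deloidRange {G : Type*} [TopologicalSpace G] [Group G] [IsTopologicalGroup G]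
    (Λ : Set G) (p : ↥(Deloid Λ)) : ↥(transv Λ) :=
  ⟨CF.smul p.1.1 p.1.2, smul_mem_hullSet p.2.1.1 p.1.1, one_mem_smul p.2.2⟩

lemma CF_isOpen_avoid {K : Set G} (hK : IsCompact K) :
    IsOpen {C : CF G | C.1 ∩ K = ∅} :=
  TopologicalSpace.isOpen_generateFrom_of_mem (Or.inl ⟨K, hK, rfl⟩)

lemma CF_isOpen_hit {V : Set G} (hV : IsOpen V) :
    IsOpen {C : CF G | (C.1 ∩ V).Nonempty} :=
  TopologicalSpace.isOpen_generateFrom_of_mem (Or.inr ⟨V, hV, rfl⟩)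

/-- Joint continuity of the translation action on `CF G`. -/
lemma continuous_CF_act {G : Type*} [TopologicalSpace G] [Group G] [IsTopologicalGroup G]
    [T2Space G] [LocallyCompactSpace G] :
    Continuous (fun p : G × CF G => CF.smul p.1 p.2) := by
  apply continuous_generateFrom_iff.mpr
  rintro U (⟨K, hK, rfl⟩ | ⟨V, hV, rfl⟩)
  · rw [isOpen_prod_iff]
    intro x₀ C₀ h0
    have h0' : C₀.1 ∩ (x₀⁻¹ • K) = ∅ := (smul_inter_empty x₀ C₀.1 K).mp h0
    have hsub : x₀⁻¹ • K ⊆ C₀.1ᶜ := by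
      intro k hk hkC
      exact absurd (Set.mem_inter hkC hk) (by rw [h0']; exact notMem_empty k)
    obtain ⟨L, hLc, hKL, hLC⟩ := exists_compact_between (hK.smul x₀⁻¹) C₀.2.isOpen_compl hsub
    have hev : ∀ᶠ y in 𝓝 x₀, ∀ k ∈ K, y⁻¹ * k ∈ interior L := by
      apply hK.eventually_forall_of_forall_eventually
      intro k hk
      have hc : ContinuousAt (fun z : G × G => z.1⁻¹ * z.2) (x₀, k) :=
        (continuous_fst.inv.mul continuous_snd).continuousAt
      have hm : x₀⁻¹ * k ∈ interior L := hKL ⟨k, hk, rfl⟩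
      exact hc (isOpen_interior.mem_nhds hm)
    obtain ⟨N, hNsub, hNo, hxN⟩ := mem_nhds_iff.mp hev
    refine ⟨N, {C : CF G | C.1 ∩ L = ∅}, hNo, CF_isOpen_avoid hLc, hxN, ?_, ?_⟩
    · show C₀.1 ∩ L = ∅
      rw [Set.eq_empty_iff_forall_notMem]
      rintro c ⟨hc1, hc2⟩
      exact hLC hc2 hc1
    · rintro ⟨y, C⟩ ⟨hy, hC⟩
      show (y • C.1) ∩ K = ∅
      rw [Set.eq_empty_iff_forall_notMem]
      rintro q ⟨hq1, hq2⟩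
      obtain ⟨c, hc, rfl⟩ := hq1
      have : y⁻¹ * (y • c) ∈ interior L := hNsub hy _ hq2
      rw [smul_eq_mul, inv_mul_cancel_left] at this
      have hcL : c ∈ C.1 ∩ L := ⟨hc, interior_subset this⟩
      rw [hC] at hcL
      exact hcL
  · rw [isOpen_prod_iff]
    intro x₀ C₀ h0
    obtain ⟨q, hq1, hq2⟩ := h0
    obtain ⟨p, hp, rfl⟩ := hq1
    have hc : ContinuousAt (fun z : G × G => z.1 * z.2) (x₀, p) :=
      (continuous_fst.mul continuous_snd).continuousAt
    have hmem : (fun z : G × G => z.1 * z.2) ⁻¹' V ∈ 𝓝 (x₀, p) :=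
      hc (hV.mem_nhds (by simpa [smul_eq_mul] using hq2))
    rw [mem_nhds_prod_iff'] at hmem
    obtain ⟨N, O, hNo, hxN, hOo, hpO, hsub⟩ := hmem
    refine ⟨N, {C : CF G | (C.1 ∩ O).Nonempty}, hNo, CF_isOpen_hit hOo, hxN, ⟨p, hp, hpO⟩, ?_⟩
    rintro ⟨y, C⟩ ⟨hy, c, hc1, hc2⟩
    have hm : (y, c) ∈ N ×ˢ O := ⟨hy, hc2⟩
    exact ⟨y * c, ⟨c, hc1, rfl⟩, hsub hm⟩

lemma CF_smul_inv_smul (x : G) (C : CF G) : CF.smul x⁻¹ (CF.smul x C) = C :=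
  Subtype.ext (by simp [CF.smul, inv_smul_smul])

lemma CF_smul_smul_inv (x : G) (C : CF G) : CF.smul x (CF.smul x⁻¹ C) = C :=
  Subtype.ext (by simp [CF.smul, smul_inv_smul])

/-- The transversal `Ω₀(Λ)` is an abstract transversal for the transformation groupoid
`G ⋉ Ω*(Λ)`: it is closed, meets every orbit, and with
`Z = {(x,P) : P ∈ Ω*(Λ), x⁻¹ ∈ P}` the restricted source map `Z → Ω*(Λ)` and the
restricted range map `Z → Ω₀(Λ)` are open maps. -/
theorem statement7 {G : Type*} [TopologicalSpace G] [Group G] [IsTopologicalGroup G]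
    [T2Space G] [LocallyCompactSpace G] [SecondCountableTopology G]
    (Λ : Set G) (hΛ : IsClosed Λ) :
    IsClosed (transv Λ) ∧
    (∀ C ∈ phull Λ, ∃ x : G, CF.smul x C ∈ transv Λ) ∧
    IsOpenMap (fun p : ↥{q : G × CF G | q.2 ∈ phull Λ ∧ (q.1)⁻¹ ∈ q.2.1} =>
      (⟨p.1.2, p.2.1⟩ : ↥(phull Λ))) ∧
    IsOpenMap (fun p : ↥{q : G × CF G | q.2 ∈ phull Λ ∧ (q.1)⁻¹ ∈ q.2.1} =>
      (⟨CF.smul p.1.1 p.1.2,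
        smul_mem_hullSet p.2.1.1 p.1.1, one_mem_smul p.2.2⟩ : ↥(transv Λ))) := by
  refine ⟨?_, ?_, ?_, ?_⟩
  · -- transv is closed
    have h1 : transv Λ = hullSet Λ ∩ {C : CF G | (1 : G) ∈ C.1} := rfl
    rw [h1]
    refine isClosed_closure.inter ?_
    have h2 : {C : CF G | (1 : G) ∈ C.1}ᶜ = {C : CF G | C.1 ∩ ({1} : Set G) = ∅} := by
      ext C
      simp only [Set.mem_compl_iff, Set.mem_setOf_eq, Set.eq_empty_iff_forall_notMem]
      constructor
      · rintro h x ⟨hxC, hx1⟩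
        exact h (Set.mem_singleton_iff.mp hx1 ▸ hxC)
      · intro h h1
        exact h 1 ⟨h1, rfl⟩
    rw [← isOpen_compl_iff, h2]
    exact CF_isOpen_avoid isCompact_singleton
  · -- meets every orbit
    rintro C ⟨hC, p, hp⟩
    refine ⟨p⁻¹, smul_mem_hullSet hC p⁻¹, ?_⟩
    exact ⟨p, hp, by simp⟩
  · -- the source map is open
    intro O hO
    obtain ⟨W, hW, rfl⟩ := isOpen_induced_iff.mp hO
    rw [isOpen_iff_forall_mem_open]
    rintro P ⟨⟨⟨x, P'⟩, hP', hx⟩, hpW, rfl⟩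
    obtain ⟨U, V, hUo, hVo, hxU, hPV, hUVsub⟩ := (isOpen_prod_iff.mp hW) x P' hpW
    refine ⟨Subtype.val ⁻¹' (V ∩ {C : CF G | (C.1 ∩ U⁻¹).Nonempty}), ?_, ?_, ?_⟩
    · rintro ⟨Q, hQ⟩ ⟨hQV, z, hz1, hz2⟩
      have hzU : z⁻¹ ∈ U := Set.mem_inv.mp hz2
      refine ⟨⟨⟨z⁻¹, Q⟩, hQ, by simpa using hz1⟩, hUVsub ⟨hzU, hQV⟩, rfl⟩
    · exact (hVo.inter (CF_isOpen_hit hUo.inv)).preimage continuous_subtype_val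
    · exact ⟨hPV, x⁻¹, hx, Set.inv_mem_inv.mpr hxU⟩
  · -- the range map is open
    intro O hO
    obtain ⟨W, hW, rfl⟩ := isOpen_induced_iff.mp hO
    set T : Set (CF G) := {Q : CF G | ∃ x : G, (x, CF.smul x⁻¹ Q) ∈ W} with hT
    have hTopen : IsOpen T := by
      have hcont : Continuous (fun q : G × CF G => (q.1, CF.smul q.1⁻¹ q.2)) := by
        refine continuous_fst.prodMk ?_
        exact continuous_CF_act.comp (continuous_fst.inv.prodMk continuous_snd)
      have himg : T = Prod.snd '' ((fun q : G × CF G =>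
          (q.1, CF.smul q.1⁻¹ q.2)) ⁻¹' W) := by
        ext Q
        constructor
        · rintro ⟨x, hx⟩; exact ⟨(x, Q), hx, rfl⟩
        · rintro ⟨⟨x, Q'⟩, hq, rfl⟩; exact ⟨x, hq⟩
      rw [himg]
      exact isOpenMap_snd _ (hcont.isOpen_preimage W hW)
    have himage : (fun p : ↥{q : G × CF G | q.2 ∈ phull Λ ∧ (q.1)⁻¹ ∈ q.2.1} =>
        (⟨CF.smul p.1.1 p.1.2,
          smul_mem_hullSet p.2.1.1 p.1.1, one_mem_smul p.2.2⟩ : ↥(transv Λ))) ''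
        (Subtype.val ⁻¹' W) = Subtype.val ⁻¹' T := by
      ext ⟨Q, hQhull, hQ1⟩
      constructor
      · rintro ⟨⟨⟨x, P⟩, hP, hx⟩, hpW, hEq⟩
        have hQP : Q = CF.smul x P := congrArg Subtype.val hEq.symm
        refine ⟨x, ?_⟩
        show (x, CF.smul x⁻¹ Q) ∈ W
        rw [hQP, CF_smul_inv_smul]
        exact hpW
      · rintro ⟨x, hxW⟩
        have hP : CF.smul x⁻¹ Q ∈ phull Λ := by
          refine ⟨smul_mem_hullSet hQhull x⁻¹, ?_⟩
          exact ⟨x⁻¹ • (1 : G), Set.smul_mem_smul_set hQ1⟩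
        have hx : x⁻¹ ∈ (CF.smul x⁻¹ Q).1 := by
          have : x⁻¹ • (1 : G) ∈ x⁻¹ • Q.1 := Set.smul_mem_smul_set hQ1
          simpa [CF.smul] using this
        refine ⟨⟨⟨x, CF.smul x⁻¹ Q⟩, hP, hx⟩, hxW, ?_⟩
        exact Subtype.ext (CF_smul_smul_inv x Q)
    rw [himage]
    exact hTopen.preimage continuous_subtype_val
end

section
/- Let Λ be a relatively separated subset of a unimodular lcsc group G and μ a nonzero finite invariant measure on the punctured hull with transverse measure μ₀. Then for every Borel set S ⊆ G with 0 < m(S) < ∞, the reciprocal of the covolume satisfies 1/covol_μ(Λ) = (1/μ(Ω*(Λ))) ∫_{Ω*(Λ)} |P ∩ S|/m(S) dμ(P). -/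
open Pointwise Set MeasureTheory Filter Topology
open scoped ENNReal

set_option linter.unusedSectionVars false
set_option linter.unusedVariables false

variable {G : Type*} [TopologicalSpace G] [Group G] [IsTopologicalGroup G]

noncomputable instance {G : Type*} [TopologicalSpace G] : MeasurableSpace (CF G) := borel _

instance {G : Type*} [TopologicalSpace G] : BorelSpace (CF G) := ⟨rfl⟩

/-- The `G`-action on the punctured hull by left translation. -/
noncomputable def phullSmul {G : Type*} [TopologicalSpace G] [Group G] [IsTopologicalGroup G]
    (Λ : Set G) (x : G) (P : ↥(phull Λ)) : ↥(phull Λ) :=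
  ⟨CF.smul x P.1, smul_mem_hullSet P.2.1 x, P.2.2.smul_set⟩

/-- A measure on the punctured hull is `G`-invariant if it is preserved by all
translations. -/
def IsInvariantMeasure {G : Type*} [TopologicalSpace G] [Group G] [IsTopologicalGroup G]
    (Λ : Set G) (μ : Measure ↥(phull Λ)) : Prop :=
  ∀ x : G, Measure.map (phullSmul Λ x) μ = μ

/-- For `P` in the punctured hull and a point `x ∈ P`, the translate `x⁻¹P` belongs to the
transversal `Ω₀(Λ)`. -/
noncomputable def ptMap {G : Type*} [TopologicalSpace G] [Group G] [IsTopologicalGroup G]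
    {Λ : Set G} (P : ↥(phull Λ)) (x : ↥(P.1.1)) : ↥(transv Λ) :=
  ⟨CF.smul (↑x : G)⁻¹ P.1, smul_mem_hullSet P.2.1 _,
    Set.mem_smul_set.mpr ⟨(↑x : G), x.2, by simp⟩⟩

/-- `μ₀` is the transverse measure of `μ`: for all `F ∈ C_c(G × Ω₀(Λ))`,
`∫_{Ω*(Λ)} Σ_{x∈P} F(x, x⁻¹P) dμ(P) = ∫_{Ω₀(Λ)} ∫_G F(x,Q) dx dμ₀(Q)`. -/
def IsTransverseMeasure {G : Type*} [TopologicalSpace G] [Group G] [IsTopologicalGroup G]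
    [MeasurableSpace G] (m : Measure G) (Λ : Set G)
    (μ : Measure ↥(phull Λ)) (μ₀ : Measure ↥(transv Λ)) : Prop :=
  ∀ F : G × ↥(transv Λ) → ℝ, Continuous F → HasCompactSupport F →
    (∫ P : ↥(phull Λ), (∑' x : ↥(P.1.1), F ((↑x : G), ptMap P x)) ∂μ) =
      ∫ Q : ↥(transv Λ), (∫ y : G, F (y, Q) ∂m) ∂μ₀


section Covolume

variable [T2Space G]

lemma isOpen_hit (V : Set G) (hV : IsOpen V) : IsOpen {C : CF G | (C.1 ∩ V).Nonempty} :=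
  TopologicalSpace.isOpen_generateFrom_of_mem (Or.inr ⟨V, hV, rfl⟩)

lemma isOpen_miss (K : Set G) (hK : IsCompact K) : IsOpen {C : CF G | C.1 ∩ K = ∅} :=
  TopologicalSpace.isOpen_generateFrom_of_mem (Or.inl ⟨K, hK, rfl⟩)

lemma CF_nhds (C : CF G) : 𝓝 C = ⨅ s ∈ {s | C ∈ s ∧ s ∈ FellBasis G}, 𝓟 s :=
  TopologicalSpace.nhds_generateFrom

lemma compactSpace_CF : CompactSpace (CF G) := by
  constructor
  rw [isCompact_iff_ultrafilter_le_nhds]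
  intro 𝒰 _
  set Cs : Set G := {x | ∀ V : Set G, IsOpen V → x ∈ V →
    {D : CF G | (D.1 ∩ V).Nonempty} ∈ 𝒰} with hCsdef
  have hclosed : IsClosed Cs := by
    rw [← isOpen_compl_iff, isOpen_iff_forall_mem_open]
    intro x hx
    simp only [Set.mem_compl_iff, hCsdef, Set.mem_setOf_eq, not_forall] at hx
    obtain ⟨V, hVo, hxV, hVn⟩ := hx
    exact ⟨V, fun y hy hyC => hVn (hyC V hVo hy), hVo, hxV⟩
  refine ⟨(⟨Cs, hclosed⟩ : CF G), Set.mem_univ _, ?_⟩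
  refine le_trans ?_ (CF_nhds (⟨Cs, hclosed⟩ : CF G)).ge
  refine le_iInf₂ fun s hs => Filter.le_principal_iff.mpr ?_
  obtain ⟨hCmem, (⟨K, hK, rfl⟩ | ⟨V, hVo, rfl⟩)⟩ := hs
  · -- miss set
    have hCsK : Cs ∩ K = ∅ := hCmem
    have hxK : ∀ x ∈ K, ∃ V : Set G, IsOpen V ∧ x ∈ V ∧ {D : CF G | D.1 ∩ V = ∅} ∈ 𝒰 := by
      intro x hxK
      have hx : x ∉ Cs := fun h => Set.eq_empty_iff_forall_notMem.mp hCsK x ⟨h, hxK⟩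
      simp only [hCsdef, Set.mem_setOf_eq, not_forall] at hx
      obtain ⟨V, hVo, hxV, hVn⟩ := hx
      refine ⟨V, hVo, hxV, ?_⟩
      have hcompl := (Ultrafilter.compl_mem_iff_notMem (f := 𝒰)).mpr hVn
      have : {D : CF G | (D.1 ∩ V).Nonempty}ᶜ = {D : CF G | D.1 ∩ V = ∅} := by
        ext D
        simp [Set.not_nonempty_iff_eq_empty]
      rwa [this] at hcompl
    choose V hVo hxV hVmem using hxK
    obtain ⟨t, ht⟩ := hK.elim_finite_subcover (fun x : K => V x x.2)
      (fun x => hVo x x.2) (fun y hy => Set.mem_iUnion.mpr ⟨⟨y, hy⟩, hxV y hy⟩)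
    have hmem : (⋂ x ∈ t, {D : CF G | D.1 ∩ V x x.2 = ∅}) ∈ 𝒰 :=
      (Filter.biInter_finset_mem t).mpr fun x _ => hVmem x x.2
    refine Filter.mem_of_superset hmem ?_
    intro D hD
    simp only [Set.mem_iInter, Set.mem_setOf_eq] at hD ⊢
    rw [Set.eq_empty_iff_forall_notMem]
    rintro y ⟨hyD, hyK⟩
    obtain ⟨x, hxt, hyV⟩ := Set.mem_iUnion₂.mp (ht hyK)
    exact Set.eq_empty_iff_forall_notMem.mp (hD x hxt) y ⟨hyD, hyV⟩
  · -- hit set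
    obtain ⟨x, hxC, hxV⟩ := hCmem
    exact hxC V hVo hxV

lemma isOpen_le_encard (V : Set G) (hV : IsOpen V) (n : ℕ) :
    IsOpen {C : CF G | (n : ℕ∞) ≤ (C.1 ∩ V).encard} := by
  rw [isOpen_iff_forall_mem_open]
  intro C hC
  obtain ⟨F, hFsub, hFcard⟩ := Set.exists_subset_encard_eq hC
  have hFfin : F.Finite := Set.finite_of_encard_eq_coe hFcard
  obtain ⟨W, hW, hWdisj⟩ := hFfin.t2_separation
  classical
  refine ⟨⋂ p ∈ hFfin.toFinset, {D : CF G | (D.1 ∩ (W p ∩ V)).Nonempty}, ?_, ?_, ?_⟩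
  · intro D hD
    simp only [Set.mem_iInter] at hD
    choose q hq using fun p (hp : p ∈ F) => hD p (hFfin.mem_toFinset.mpr hp)
    set g : G → G := fun p => if hp : p ∈ F then q p hp else p with hg
    have hinj : Set.InjOn g F := by
      intro p hp p' hp' hpp'
      by_contra hne
      have h1 : q p hp ∈ W p := (hq p hp).2.1
      have h2 : q p' hp' ∈ W p' := (hq p' hp').2.1
      simp only [hg, dif_pos hp, dif_pos hp'] at hpp'
      rw [← hpp'] at h2
      exact Set.disjoint_left.mp (hWdisj hp hp' hne) h1 h2
    have hsub : g '' F ⊆ D.1 ∩ V := by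
      rintro _ ⟨p, hp, rfl⟩
      simp only [hg, dif_pos hp]
      exact ⟨(hq p hp).1, (hq p hp).2.2⟩
    calc (n : ℕ∞) = F.encard := hFcard.symm
      _ = (g '' F).encard := hinj.encard_image.symm
      _ ≤ (D.1 ∩ V).encard := Set.encard_le_encard hsub
  · exact isOpen_biInter_finset fun p _ => isOpen_hit _ ((hW p).2.inter hV)
  · simp only [Set.mem_iInter]
    intro p hp
    have hp' := hFfin.mem_toFinset.mp hp
    exact ⟨p, ⟨(hFsub hp').1, (hW p).1, (hFsub hp').2⟩⟩

lemma hull_bound {Λ : Set G} (hΛ : RelSep Λ) :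
    ∃ U : Set G, IsOpen U ∧ (1 : G) ∈ U ∧ ∃ ℓ : ℕ,
      ∀ C ∈ hullSet Λ, ∀ x : G, (C.1 ∩ x • U).encard ≤ ℓ := by
  obtain ⟨U₀, hO, ⟨u, hu⟩, ℓ, hb⟩ := hΛ
  set U : Set G := u⁻¹ • U₀ with hUdef
  have hUo : IsOpen U := hO.smul _
  have h1U : (1 : G) ∈ U := Set.mem_smul_set.mpr ⟨u, hu, by simp⟩
  have hΛU : ∀ z : G, (Λ ∩ z • U).encard ≤ ℓ := by
    intro z
    have : z • U = (z * u⁻¹) • U₀ := by rw [hUdef, smul_smul]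
    rw [this]
    exact hb _
  clear_value U
  refine ⟨U, hUo, h1U, ℓ, ?_⟩
  have hAclosed : IsClosed {C : CF G | ∀ x : G, (C.1 ∩ x • U).encard ≤ (ℓ : ℕ∞)} := by
    have heq : {C : CF G | ∀ x : G, (C.1 ∩ x • U).encard ≤ (ℓ : ℕ∞)}
        = ⋂ x : G, {C : CF G | ((ℓ + 1 : ℕ) : ℕ∞) ≤ (C.1 ∩ x • U).encard}ᶜ := by
      ext C
      simp only [Set.mem_iInter, Set.mem_compl_iff, Set.mem_setOf_eq]
      refine forall_congr' fun x => ?_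
      rw [not_le]
      push_cast
      exact (ENat.lt_add_one_iff (by simp)).symm
    rw [heq]
    exact isClosed_iInter fun x => (isOpen_le_encard _ (hUo.smul x) (ℓ + 1)).isClosed_compl
  have hgen : {C : CF G | ∃ x : G, C.1 = x • Λ}
      ⊆ {C : CF G | ∀ x : G, (C.1 ∩ x • U).encard ≤ (ℓ : ℕ∞)} := by
    rintro C ⟨y, hy⟩ x
    have h1 : C.1 ∩ x • U = y • (Λ ∩ (y⁻¹ * x) • U) := by
      rw [hy, Set.smul_set_inter, smul_smul, mul_inv_cancel_left]
    rw [h1, Set.encard_smul_set]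
    exact hΛU _
  exact fun C hC x => closure_minimal hgen hAclosed hC x


lemma isClosed_transv (Λ : Set G) : IsClosed (transv Λ) := by
  have h1 : IsClosed {C : CF G | (1 : G) ∈ C.1} := by
    have heq : {C : CF G | (1 : G) ∈ C.1} = {C : CF G | C.1 ∩ {1} = ∅}ᶜ := by
      ext C
      simp [Set.eq_empty_iff_forall_notMem]
    rw [heq]
    exact (isOpen_miss _ isCompact_singleton).isClosed_compl
  exact IsClosed.inter isClosed_closure h1

variable [MeasurableSpace G] [BorelSpace G]

lemma measurableSet_phull (Λ : Set G) : MeasurableSet (phull Λ) := by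
  have h1 : IsOpen {C : CF G | (C.1).Nonempty} := by
    have heq : {C : CF G | (C.1).Nonempty} = {C : CF G | (C.1 ∩ Set.univ).Nonempty} := by
      simp [Set.inter_univ]
    rw [heq]
    exact isOpen_hit _ isOpen_univ
  exact MeasurableSet.inter isClosed_closure.measurableSet h1.measurableSet

lemma count_eq_encard (s : Set G) : Measure.count s = s.encard := by
  rcases s.finite_or_infinite with h | h
  · rw [Measure.count_apply_finite s h, h.encard_eq_coe_toFinset_card, ENat.toENNReal_coe]
  · rw [Measure.count_apply_infinite h, h.encard_eq, ENat.toENNReal_top]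

lemma enat_toENNReal_eq_iSup (a : ℕ∞) :
    (a : ℝ≥0∞) = ⨆ n : ℕ, if (n : ℕ∞) ≤ a then (n : ℝ≥0∞) else 0 := by
  induction a using ENat.recTopCoe with
  | top =>
    rw [ENat.toENNReal_top, eq_comm, iSup_eq_top]
    intro b hb
    obtain ⟨n, hn⟩ := ENNReal.exists_nat_gt hb.ne
    exact ⟨n, by simpa [le_top] using hn⟩
  | coe k =>
    apply le_antisymm
    · refine le_trans ?_ (le_iSup _ k)
      simp
    · refine iSup_le fun n => ?_
      split_ifs with h
      · exact_mod_cast h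
      · exact zero_le

lemma measurable_count_open {Λ : Set G} {V : Set G} (hV : IsOpen V) :
    Measurable fun P : ↥(phull Λ) => Measure.count (V ∩ P.1.1) := by
  have heq : (fun P : ↥(phull Λ) => Measure.count (V ∩ P.1.1))
      = fun P => ⨆ n : ℕ, if (n : ℕ∞) ≤ (P.1.1 ∩ V).encard then (n : ℝ≥0∞) else 0 := by
    funext P
    rw [Set.inter_comm, count_eq_encard]
    exact enat_toENNReal_eq_iSup _
  rw [heq]
  refine Measurable.iSup fun n => Measurable.ite ?_ measurable_const measurable_const
  exact (isOpen_le_encard V hV n).measurableSet.preimage measurable_subtype_coe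

lemma measurable_count_window {Λ : Set G} {W : Set G} (hW : IsOpen W) {ℓ : ℕ}
    (hbound : ∀ P : ↥(phull Λ), (P.1.1 ∩ W).encard ≤ ℓ) :
    ∀ ⦃S : Set G⦄, MeasurableSet S →
      Measurable fun P : ↥(phull Λ) => Measure.count (S ∩ W ∩ P.1.1) := by
  have h_eq : (inferInstance : MeasurableSpace G)
      = MeasurableSpace.generateFrom {s : Set G | IsOpen s} := by
    rw [BorelSpace.measurable_eq (α := G)]; rfl
  refine MeasurableSpace.induction_on_inter h_eq isPiSystem_isOpen ?_ ?_ ?_ ?_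
  · simp
  · intro t ht
    exact measurable_count_open (ht.inter hW)
  · intro t htm hC
    have key : ∀ P : ↥(phull Λ), Measure.count (tᶜ ∩ W ∩ P.1.1)
        = Measure.count (W ∩ P.1.1) - Measure.count (t ∩ W ∩ P.1.1) := by
      intro P
      have hPm : MeasurableSet P.1.1 := P.1.2.measurableSet
      have hdisj : Disjoint (t ∩ W ∩ P.1.1) (tᶜ ∩ W ∩ P.1.1) := by
        refine Set.disjoint_left.mpr ?_
        rintro y ⟨⟨hyt, -⟩, -⟩ ⟨⟨hyt', -⟩, -⟩
        exact hyt' hyt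
      have hunion : (t ∩ W ∩ P.1.1) ∪ (tᶜ ∩ W ∩ P.1.1) = W ∩ P.1.1 := by
        ext y
        by_cases hyt : y ∈ t <;> simp [hyt]
      have hadd : Measure.count (W ∩ P.1.1)
          = Measure.count (t ∩ W ∩ P.1.1) + Measure.count (tᶜ ∩ W ∩ P.1.1) := by
        rw [← hunion, measure_union hdisj ((htm.compl.inter hW.measurableSet).inter hPm)]
      have hfin : Measure.count (t ∩ W ∩ P.1.1) ≠ ⊤ := by
        have hle : Measure.count (t ∩ W ∩ P.1.1) ≤ Measure.count (W ∩ P.1.1) :=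
          measure_mono (by intro y hy; exact ⟨hy.1.2, hy.2⟩)
        have hWl : Measure.count (W ∩ P.1.1) ≤ (ℓ : ℝ≥0∞) := by
          calc Measure.count (W ∩ P.1.1) = ((P.1.1 ∩ W).encard : ℝ≥0∞) := by
                rw [count_eq_encard, Set.inter_comm]
            _ ≤ ((ℓ : ℕ∞) : ℝ≥0∞) := ENat.toENNReal_le.mpr (hbound P)
            _ = (ℓ : ℝ≥0∞) := ENat.toENNReal_coe ℓ
        exact ((hle.trans hWl).trans_lt (ENNReal.natCast_lt_top ℓ)).ne
      rw [hadd, ENNReal.add_sub_cancel_left hfin]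
    simp_rw [key]
    exact (measurable_count_open hW).sub hC
  · intro f hdisj hfm hC
    have key : ∀ P : ↥(phull Λ), Measure.count ((⋃ i, f i) ∩ W ∩ P.1.1)
        = ∑' i, Measure.count (f i ∩ W ∩ P.1.1) := by
      intro P
      have hiU : (⋃ i, f i) ∩ W ∩ P.1.1 = ⋃ i, f i ∩ W ∩ P.1.1 := by
        rw [Set.iUnion_inter, Set.iUnion_inter]
      rw [hiU, measure_iUnion
        (fun i j hij => Disjoint.mono (Set.inter_subset_left.trans Set.inter_subset_left)
          (Set.inter_subset_left.trans Set.inter_subset_left) (hdisj hij))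
        (fun i => ((hfm i).inter hW.measurableSet).inter P.1.2.measurableSet)]
    simp_rw [key]
    exact Measurable.ennreal_tsum hC

lemma measurable_count {Λ : Set G} [SecondCountableTopology G] (hΛ : RelSep Λ)
    {S : Set G} (hS : MeasurableSet S) :
    Measurable fun P : ↥(phull Λ) => Measure.count (S ∩ P.1.1) := by
  classical
  obtain ⟨U, hUo, hU1, ℓ, hb⟩ := hull_bound hΛ
  obtain ⟨T, hTc, hTU⟩ := TopologicalSpace.isOpen_iUnion_countable (fun x : G => x • U)
    (fun x => hUo.smul x)
  have huniv : ⋃ x ∈ T, x • U = Set.univ := by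
    rw [hTU]
    apply Set.eq_univ_of_forall
    intro y
    exact Set.mem_iUnion.mpr ⟨y, Set.mem_smul_set.mpr ⟨1, hU1, mul_one y⟩⟩
  have hTne : T.Nonempty := by
    rcases Set.eq_empty_or_nonempty T with h | h
    · exfalso
      rw [h] at huniv
      simp only [Set.mem_empty_iff_false, Set.iUnion_of_empty, Set.iUnion_empty] at huniv
      exact (Set.eq_empty_iff_forall_notMem.mp huniv.symm) 1 (Set.mem_univ 1)
    · exact h
  obtain ⟨e, he⟩ := Set.Countable.exists_eq_range hTc hTne
  set D : ℕ → Set G := disjointed (fun n => e n • U) with hDdef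
  have hDsub : ∀ n, D n ⊆ e n • U := fun n => disjointed_subset _ n
  have hDdisj : Pairwise (Function.onFun Disjoint D) := disjoint_disjointed _
  have hDm : ∀ n, MeasurableSet (D n) :=
    MeasurableSet.disjointed (fun n => (hUo.smul (e n)).measurableSet)
  have hDuniv : (⋃ n, D n) = Set.univ := by
    rw [hDdef, iUnion_disjointed]
    rw [he, Set.biUnion_range] at huniv
    exact huniv
  have key : ∀ P : ↥(phull Λ), Measure.count (S ∩ P.1.1)
      = ∑' n, Measure.count ((S ∩ D n) ∩ (e n • U) ∩ P.1.1) := by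
    intro P
    have h2 : ∀ n, (S ∩ D n) ∩ (e n • U) = S ∩ D n :=
      fun n => Set.inter_eq_left.mpr (Set.inter_subset_right.trans (hDsub n))
    have h1 : S ∩ P.1.1 = ⋃ n, (S ∩ D n) ∩ (e n • U) ∩ P.1.1 := by
      have h3 : (⋃ n, (S ∩ D n) ∩ (e n • U) ∩ P.1.1) = ⋃ n, (S ∩ D n) ∩ P.1.1 :=
        Set.iUnion_congr fun n => by rw [h2 n]
      rw [h3, ← Set.iUnion_inter, ← Set.inter_iUnion, hDuniv, Set.inter_univ]
    rw [h1, measure_iUnion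
      (fun i j hij => Disjoint.mono
        (Set.inter_subset_left.trans Set.inter_subset_left |>.trans Set.inter_subset_right)
        (Set.inter_subset_left.trans Set.inter_subset_left |>.trans Set.inter_subset_right)
        (hDdisj hij))
      (fun i => (((hS.inter (hDm i)).inter (hUo.smul (e i)).measurableSet)).inter
        P.1.2.measurableSet)]
  simp_rw [key]
  exact Measurable.ennreal_tsum fun n =>
    measurable_count_window (hUo.smul (e n)) (fun P => hb P.1 P.2.1 (e n)) (hS.inter (hDm n))

/-- The counting measure of `P`, as a measure on `G`. -/
noncomputable def kappa {Λ : Set G} (P : ↥(phull Λ)) : Measure G :=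
  Measure.count.restrict P.1.1

lemma kappa_apply {Λ : Set G} (P : ↥(phull Λ)) {s : Set G} (hs : MeasurableSet s) :
    kappa P s = Measure.count (s ∩ P.1.1) :=
  Measure.restrict_apply hs

lemma measurable_kappa {Λ : Set G} [SecondCountableTopology G] (hΛ : RelSep Λ) :
    Measurable (kappa (Λ := Λ)) :=
  Measure.measurable_of_measurable_coe _ fun s hs => by
    simp_rw [kappa_apply _ hs]
    exact measurable_count hΛ hs

lemma lintegral_kappa {Λ : Set G} (P : ↥(phull Λ)) {g : G → ℝ≥0∞} (hg : Measurable g) :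
    ∫⁻ y, g y ∂(kappa P) = ∑' x : ↥(P.1.1), g ↑x := by
  have h1 : ∫⁻ y, g y ∂(kappa P) = ∫⁻ y, (P.1.1).indicator g y ∂Measure.count :=
    (lintegral_indicator P.1.2.measurableSet g).symm
  rw [h1, MeasureTheory.lintegral_count, ← tsum_subtype]

end Covolume

/-- Averaging formula for the covolume: with `μ` a nonzero finite invariant measure on the
punctured hull and `μ₀` its transverse measure, for every Borel set `S ⊆ G` with
`0 < m(S) < ∞` one has `1/covol_μ(Λ) = (1/μ(Ω*(Λ))) ∫ |P ∩ S|/m(S) dμ(P)`, where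
`covol_μ(Λ) = μ(Ω*(Λ))/μ₀(Ω₀(Λ))`. -/
theorem statement9 {G : Type*} [TopologicalSpace G] [Group G] [IsTopologicalGroup G]
    [T2Space G] [LocallyCompactSpace G] [SecondCountableTopology G]
    [MeasurableSpace G] [BorelSpace G]
    (m : Measure G) [m.IsHaarMeasure] [m.IsMulRightInvariant]
    (Λ : Set G) (hΛ : RelSep Λ)
    (μ : Measure ↥(phull Λ)) [IsFiniteMeasure μ] (hμ0 : μ ≠ 0)
    (hμinv : IsInvariantMeasure Λ μ)
    (μ₀ : Measure ↥(transv Λ)) [IsFiniteMeasure μ₀] (hμ₀0 : μ₀ ≠ 0)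
    (htrans : IsTransverseMeasure m Λ μ μ₀)
    (S : Set G) (hS : MeasurableSet S) (hS0 : 0 < m S) (hSfin : m S < ⊤) :
    (μ Set.univ / μ₀ Set.univ)⁻¹ =
      (μ Set.univ)⁻¹ *
        ∫⁻ P : ↥(phull Λ), ((P.1.1 ∩ S).encard : ℝ≥0∞) / m S ∂μ := by
  classical
  obtain ⟨U, hUo, hU1, ℓ, hb⟩ := hull_bound hΛ
  haveI : CompactSpace (CF G) := compactSpace_CF
  have hκmeas : Measurable (kappa (Λ := Λ)) := measurable_kappa hΛ
  set ν : Measure G := μ.bind kappa with hνdef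
  have hν_apply : ∀ ⦃s : Set G⦄, MeasurableSet s →
      ν s = ∫⁻ P : ↥(phull Λ), Measure.count (s ∩ P.1.1) ∂μ := by
    intro s hs
    rw [hνdef, Measure.bind_apply hs hκmeas.aemeasurable]
    exact lintegral_congr fun P => kappa_apply P hs
  have hsmul_meas : ∀ g : G, Measurable (phullSmul Λ g) := fun g =>
    Continuous.measurable (Continuous.subtype_mk
      ((continuous_CFsmul g).comp continuous_subtype_val) _)
  have hcount_smul : ∀ (g : G) (t : Set G), Measure.count (g • t) = Measure.count t := by
    intro g t
    rw [count_eq_encard, count_eq_encard, Set.encard_smul_set]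
  have hν_smul : ∀ (g : G) ⦃s : Set G⦄, MeasurableSet s → ν (g • s) = ν s := by
    intro g s hs
    have hsm : MeasurableSet (g • s) := by
      have hpre : g • s = (g⁻¹ * ·) ⁻¹' s := by
        ext y
        rw [Set.mem_smul_set_iff_inv_smul_mem]
        rfl
      rw [hpre]
      exact hs.preimage (measurable_const_mul g⁻¹)
    rw [hν_apply hsm, hν_apply hs]
    have h1 : ∀ P : ↥(phull Λ), Measure.count ((g • s) ∩ P.1.1)
        = Measure.count (s ∩ (phullSmul Λ g⁻¹ P).1.1) := by
      intro P
      have h2 : (g • s) ∩ P.1.1 = g • (s ∩ g⁻¹ • P.1.1) := by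
        rw [Set.smul_set_inter, smul_inv_smul]
      rw [h2, hcount_smul]
      rfl
    simp_rw [h1]
    rw [← lintegral_map (measurable_count hΛ hs) (hsmul_meas g⁻¹), hμinv g⁻¹]
  haveI hνinv : ν.IsMulLeftInvariant := by
    constructor
    intro g
    refine Measure.ext fun s hs => ?_
    rw [Measure.map_apply (measurable_const_mul g) hs]
    have hpre : (g * ·) ⁻¹' s = g⁻¹ • s := by
      have := Set.preimage_smul g s
      simpa [smul_eq_mul] using this
    rw [hpre, hν_smul g⁻¹ hs]
  have hν_window : ∀ x : G, ν (x • U) ≤ (ℓ : ℝ≥0∞) * μ Set.univ := by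
    intro x
    have hm : MeasurableSet (x • U) := (hUo.smul x).measurableSet
    rw [hν_apply hm]
    calc ∫⁻ P : ↥(phull Λ), Measure.count ((x • U) ∩ P.1.1) ∂μ
        ≤ ∫⁻ _ : ↥(phull Λ), (ℓ : ℝ≥0∞) ∂μ := by
          refine lintegral_mono fun P => ?_
          calc Measure.count ((x • U) ∩ P.1.1) = ((P.1.1 ∩ x • U).encard : ℝ≥0∞) := by
                rw [count_eq_encard, Set.inter_comm]
            _ ≤ ((ℓ : ℕ∞) : ℝ≥0∞) := ENat.toENNReal_le.mpr (hb P.1 P.2.1 x)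
            _ = (ℓ : ℝ≥0∞) := ENat.toENNReal_coe ℓ
      _ = (ℓ : ℝ≥0∞) * μ Set.univ := lintegral_const _
  haveI hνfin : IsFiniteMeasureOnCompacts ν := by
    constructor
    intro K hK
    obtain ⟨t, ht⟩ := hK.elim_finite_subcover (fun x : G => x • U)
      (fun x => hUo.smul x)
      (fun y _ => Set.mem_iUnion.mpr ⟨y, Set.mem_smul_set.mpr ⟨1, hU1, mul_one y⟩⟩)
    calc ν K ≤ ν (⋃ x ∈ t, x • U) := measure_mono ht
      _ ≤ ∑ x ∈ t, ν (x • U) := measure_biUnion_finset_le t _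
      _ ≤ ∑ _x ∈ t, (ℓ : ℝ≥0∞) * μ Set.univ := Finset.sum_le_sum fun x _ => hν_window x
      _ < ⊤ := ENNReal.sum_lt_top.mpr fun x _ =>
          ENNReal.mul_lt_top (ENNReal.natCast_lt_top ℓ) (measure_lt_top μ _)
  set c : ℝ≥0∞ := (Measure.haarScalarFactor ν m : ℝ≥0∞) with hcdef
  have hν_eq : ν = c • m := by
    have h := Measure.isMulLeftInvariant_eq_smul ν m
    ext s hs
    rw [h]
    simp only [Measure.smul_apply, hcdef, ENNReal.smul_def, smul_eq_mul]
  -- choice of a bump function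
  obtain ⟨⟨f, f_cont⟩, f_comp, f_nonneg, f_one⟩ :
      ∃ f : C(G, ℝ), HasCompactSupport f ∧ 0 ≤ f ∧ f 1 ≠ 0 := exists_continuous_nonneg_pos 1
  have f_nn : ∀ x : G, 0 ≤ f x := fun x => f_nonneg x
  haveI : CompactSpace ↥(transv Λ) := isCompact_iff_compactSpace.mp (isClosed_transv Λ).isCompact
  set F : G × ↥(transv Λ) → ℝ := fun p => f p.1 with hFdef
  have hFcont : Continuous F := f_cont.comp continuous_fst
  have hFsupp : HasCompactSupport F := by
    have f_comp' : HasCompactSupport f := f_comp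
    refine HasCompactSupport.intro' (f_comp'.prod isCompact_univ)
      ((isClosed_tsupport f).prod isClosed_univ) ?_
    intro p hp
    have hp1 : p.1 ∉ tsupport f := fun h => hp ⟨h, Set.mem_univ _⟩
    simp only [hFdef]
    exact image_eq_zero_of_notMem_tsupport hp1
  have ht := htrans F hFcont hFsupp
  set φ : ↥(phull Λ) → ℝ≥0∞ := fun P => ∑' x : ↥(P.1.1), ENNReal.ofReal (f ↑x) with hφdef
  have hg : Measurable fun y : G => ENNReal.ofReal (f y) :=
    ENNReal.measurable_ofReal.comp f_cont.measurable
  have hφeq : ∀ P : ↥(phull Λ), φ P = ∫⁻ y, ENNReal.ofReal (f y) ∂(kappa P) :=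
    fun P => (lintegral_kappa P hg).symm
  have hφmeas : Measurable φ := by
    have hco : φ = (fun μ' : Measure G => ∫⁻ y, ENNReal.ofReal (f y) ∂μ') ∘ (kappa (Λ := Λ)) :=
      funext hφeq
    rw [hco]
    exact (Measure.measurable_lintegral hg).comp hκmeas
  set I : ℝ≥0∞ := ∫⁻ y, ENNReal.ofReal (f y) ∂m with hIdef
  have hIne : I ≠ ⊤ := by
    have hint : Integrable f m := f_cont.integrable_of_hasCompactSupport f_comp
    exact ((lintegral_mono fun y => Real.ofReal_le_enorm (f y)).trans_lt hint.2).ne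
  have hIpos : I ≠ 0 := by
    have hf1 : 0 < f 1 := lt_of_le_of_ne (f_nn 1) (Ne.symm f_one)
    set N : Set G := f ⁻¹' Set.Ioi (f 1 / 2) with hNdef
    have hNo : IsOpen N := isOpen_Ioi.preimage f_cont
    have hN1 : (1 : G) ∈ N := by
      simp only [hNdef, Set.mem_preimage, Set.mem_Ioi]
      linarith
    have hlow : ENNReal.ofReal (f 1 / 2) * m N ≤ I := by
      rw [hIdef, ← lintegral_indicator_const hNo.measurableSet (ENNReal.ofReal (f 1 / 2))]
      refine lintegral_mono fun y => ?_
      by_cases hy : y ∈ N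
      · simp only [Set.indicator_of_mem hy]
        exact ENNReal.ofReal_le_ofReal (le_of_lt hy)
      · simp [Set.indicator_of_notMem hy]
    refine fun h0 => ?_
    rw [h0, le_zero_iff] at hlow
    rcases mul_eq_zero.mp hlow with h | h
    · exact absurd h (by positivity)
    · exact hNo.measure_ne_zero m ⟨1, hN1⟩ h
  have hφlint : ∫⁻ P, φ P ∂μ = c * I := by
    have h1 : ∫⁻ P, φ P ∂μ = ∫⁻ y, ENNReal.ofReal (f y) ∂ν := by
      rw [hνdef, Measure.lintegral_bind hκmeas.aemeasurable hg.aemeasurable]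
      exact lintegral_congr fun P => hφeq P
    rw [h1, hν_eq, lintegral_smul_measure, smul_eq_mul]
  have hφμfin : ∫⁻ P, φ P ∂μ ≠ ⊤ := by
    rw [hφlint]
    exact ENNReal.mul_ne_top ENNReal.coe_ne_top hIne
  have hps : ∀ P : ↥(phull Λ), (∑' x : ↥(P.1.1), F ((↑x : G), ptMap P x)) = (φ P).toReal := by
    intro P
    rw [hφdef]
    rw [ENNReal.tsum_toReal_eq (fun _ => ENNReal.ofReal_ne_top)]
    exact tsum_congr fun x => (ENNReal.toReal_ofReal (f_nn _)).symm
  have hL : (∫ P : ↥(phull Λ), (∑' x : ↥(P.1.1), F ((↑x : G), ptMap P x)) ∂μ)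
      = (∫⁻ P, φ P ∂μ).toReal := by
    simp_rw [hps]
    exact integral_toReal hφmeas.aemeasurable (ae_lt_top hφmeas hφμfin)
  have hR : (∫ Q : ↥(transv Λ), (∫ y : G, F (y, Q) ∂m) ∂μ₀)
      = (μ₀ Set.univ).toReal * I.toReal := by
    have hfm : ∫ y : G, f y ∂m = I.toReal := by
      rw [hIdef]
      exact integral_eq_lintegral_of_nonneg_ae (Filter.Eventually.of_forall f_nn)
        f_cont.aestronglyMeasurable
    simp only [hFdef]
    rw [integral_const, hfm, smul_eq_mul]
    rfl
  rw [hL, hR, hφlint, ENNReal.toReal_mul] at ht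
  have hIo : I.toReal ≠ 0 := ENNReal.toReal_ne_zero.mpr ⟨hIpos, hIne⟩
  have hc : c = μ₀ Set.univ := by
    have h3 : c.toReal = (μ₀ Set.univ).toReal := mul_right_cancel₀ hIo ht
    exact (ENNReal.toReal_eq_toReal_iff' ENNReal.coe_ne_top (measure_ne_top μ₀ _)).mp h3
  have hcount : ∀ P : ↥(phull Λ), ((P.1.1 ∩ S).encard : ℝ≥0∞) = Measure.count (S ∩ P.1.1) := by
    intro P
    rw [count_eq_encard, Set.inter_comm]
  have hint : ∫⁻ P : ↥(phull Λ), ((P.1.1 ∩ S).encard : ℝ≥0∞) / m S ∂μ = c := by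
    simp_rw [hcount, div_eq_mul_inv]
    rw [lintegral_mul_const _ (measurable_count hΛ hS), ← hν_apply hS, hν_eq]
    simp only [Measure.smul_apply, smul_eq_mul]
    rw [mul_assoc, ENNReal.mul_inv_cancel hS0.ne' hSfin.ne, mul_one]
  rw [hint, hc]
  have hμne : μ Set.univ ≠ 0 := by
    simpa [Measure.measure_univ_eq_zero] using hμ0
  rw [div_eq_mul_inv, ENNReal.mul_inv (Or.inl hμne) (Or.inl (measure_ne_top μ _)), inv_inv]
end

section
/- For a relatively separated subset Λ of a locally compact second-countable group G and any precompact open identity neighborhood U, the function P ↦ |P ∩ U| on the punctured hull of Λ is lower semicontinuous; and for any compact set K ⊆ G, one has rel(Λ)·|P ∩ K| ≥ limsup_{P'→P} |P' ∩ K|. In particular, if Λ is separated then P ↦ |P ∩ K| is upper semicontinuous. -/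
open Pointwise Set MeasureTheory Filter Topology
open scoped ENNReal

set_option linter.unusedSectionVars false
set_option linter.unusedVariables false

variable {G : Type*} [TopologicalSpace G] [Group G] [IsTopologicalGroup G]

variable {G : Type*} [TopologicalSpace G] [Group G] [IsTopologicalGroup G]

/-- The lower Beurling density `D⁻(Λ) = sup_K inf_x |Λ ∩ xK|/m(K)`. -/
noncomputable def lowerBD [MeasurableSpace G] (m : Measure G) (Λ : Set G) : ℝ≥0∞ :=
  ⨆ K ∈ {K : Set G | IsCompact K ∧ 0 < m K}, ⨅ x : G, ((Λ ∩ x • K).encard : ℝ≥0∞) / m K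

/-- The upper Beurling density `D⁺(Λ) = inf_K sup_x |Λ ∩ xK|/m(K)`. -/
noncomputable def upperBD [MeasurableSpace G] (m : Measure G) (Λ : Set G) : ℝ≥0∞ :=
  ⨅ K ∈ {K : Set G | IsCompact K ∧ 0 < m K}, ⨆ x : G, ((Λ ∩ x • K).encard : ℝ≥0∞) / m K

/-- The lower hull Beurling density `D⁻⁻(Λ) = sup_K inf_{P ∈ Ω*(Λ)} |P ∩ K|/m(K)`. -/
noncomputable def lowerHullBD [MeasurableSpace G] (m : Measure G) (Λ : Set G) : ℝ≥0∞ :=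
  ⨆ K ∈ {K : Set G | IsCompact K ∧ 0 < m K},
    ⨅ P ∈ phull Λ, ((P.1 ∩ K).encard : ℝ≥0∞) / m K

/-- The upper hull Beurling density `D⁺⁺(Λ) = inf_K sup_{P ∈ Ω*(Λ)} |P ∩ K|/m(K)`. -/
noncomputable def upperHullBD [MeasurableSpace G] (m : Measure G) (Λ : Set G) : ℝ≥0∞ :=
  ⨅ K ∈ {K : Set G | IsCompact K ∧ 0 < m K},
    ⨆ P ∈ phull Λ, ((P.1 ∩ K).encard : ℝ≥0∞) / m K

/-- The minimal relative separation constant `rel(Λ) = inf_U sup_x |Λ ∩ xU|`, the infimum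
being over identity neighborhoods `U`. -/
noncomputable def relC (Λ : Set G) : ℝ≥0∞ :=
  ⨅ U ∈ nhds (1 : G), ⨆ x : G, ((Λ ∩ x • U).encard : ℝ≥0∞)

/-- `F` is a (right) strong Følner sequence for `G`:
`m(F_n K ∩ F_nᶜ K)/m(F_n) → 0` for every compact `K`. The existence of such a sequence
witnesses amenability of `G`. -/
def StrongFolner [MeasurableSpace G] (m : Measure G) (F : ℕ → Set G) : Prop :=
  (∀ n, IsCompact (F n)) ∧ (∀ n, 0 < m (F n)) ∧
    ∀ K : Set G, IsCompact K →
      Tendsto (fun n => m ((F n * K) ∩ ((F n)ᶜ * K)) / m (F n)) atTop (nhds 0)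

section Aux

variable {G : Type*} [TopologicalSpace G] [Group G] [IsTopologicalGroup G]

/-- Key openness lemma: the set of closed sets with at least `m` points in an open set `V`
is Fell-open around any closed set with at least `m` points in `V`. -/
lemma exists_fell_open_count [T2Space G] (C : CF G) {V : Set G} (hV : IsOpen V) (m : ℕ)
    (hm : (m : ℕ∞) ≤ (C.1 ∩ V).encard) :
    ∃ O : Set (CF G), IsOpen O ∧ C ∈ O ∧
      ∀ C' : CF G, C' ∈ O → (m : ℕ∞) ≤ (C'.1 ∩ V).encard := by
  obtain ⟨s, hsub, hs⟩ := Set.exists_subset_encard_eq hm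
  have hsfin : s.Finite := Set.finite_of_encard_eq_coe hs
  obtain ⟨U, hU, hdisj⟩ := hsfin.t2_separation
  set W : G → Set G := fun p => U p ∩ V with hW
  refine ⟨⋂ p ∈ s, {C' : CF G | (C'.1 ∩ W p).Nonempty}, ?_, ?_, ?_⟩
  · refine hsfin.isOpen_biInter (fun p hp => ?_)
    exact TopologicalSpace.isOpen_generateFrom_of_mem
      (Or.inr ⟨W p, (hU p).2.inter hV, rfl⟩)
  · refine Set.mem_iInter₂.mpr (fun p hp => ?_)
    exact ⟨p, (hsub hp).1, (hU p).1, (hsub hp).2⟩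
  · intro C' hC'
    rw [Set.mem_iInter₂] at hC'
    choose q hq using hC'
    classical
    set f : G → G := fun p => if h : p ∈ s then q p h else 1 with hf
    have hinj : Set.InjOn f s := by
      intro p₁ hp₁ p₂ hp₂ he
      by_contra hne
      simp only [hf, dif_pos hp₁, dif_pos hp₂] at he
      exact (hdisj hp₁ hp₂ hne).le_bot ⟨(hq p₁ hp₁).2.1, he ▸ (hq p₂ hp₂).2.1⟩
    calc (m : ℕ∞) = s.encard := hs.symm
      _ = (f '' s).encard := (Set.InjOn.encard_image hinj).symm
      _ ≤ (C'.1 ∩ V).encard := by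
          refine Set.encard_le_encard ?_
          rintro x ⟨p, hp, rfl⟩
          simp only [hf, dif_pos hp]
          exact ⟨(hq p hp).1, (hq p hp).2.2⟩

end Aux

section Aux2

variable {G : Type*} [TopologicalSpace G] [Group G] [IsTopologicalGroup G]

/-- ℕ∞-valued comparison helper. -/
lemma le_of_forall_nat_le {e : ℕ∞} {c : ℝ≥0∞}
    (h : ∀ n : ℕ, (n : ℕ∞) ≤ e → (n : ℝ≥0∞) ≤ c) : (e : ℝ≥0∞) ≤ c := by
  cases e with
  | top =>
    simp only [ENat.toENNReal_top, top_le_iff]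
    by_contra hc
    obtain ⟨n, hn⟩ := ENNReal.exists_nat_gt (fun h : c = ⊤ => hc h)
    exact absurd (h n le_top) (not_le.mpr hn)
  | coe n => exact h n le_rfl

/-- Hull bound: any member of the hull satisfies the same count bounds in open sets
as the translates of `Λ`. -/
lemma hull_count_le [T2Space G] {Λ : Set G} {P : CF G} (hP : P ∈ hullSet Λ)
    {V : Set G} (hV : IsOpen V) :
    ((P.1 ∩ V).encard : ℝ≥0∞) ≤ ⨆ x : G, ((Λ ∩ x • V).encard : ℝ≥0∞) := by
  refine le_of_forall_nat_le (fun m hm => ?_)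
  obtain ⟨O, hO, hPO, hcount⟩ := exists_fell_open_count P hV m hm
  obtain ⟨C, hCO, y, hy⟩ := mem_closure_iff.mp hP O hO hPO
  have := hcount C hCO
  rw [hy] at this
  have he : ((y • Λ) ∩ V) = y • (Λ ∩ y⁻¹ • V) := by
    rw [Set.smul_set_inter, smul_inv_smul]
  rw [he, Set.encard_smul_set] at this
  calc ((m : ℕ∞) : ℝ≥0∞) ≤ ((Λ ∩ y⁻¹ • V).encard : ℝ≥0∞) := by exact_mod_cast this
    _ ≤ _ := le_iSup (fun x : G => ((Λ ∩ x • V).encard : ℝ≥0∞)) y⁻¹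

end Aux2

section Aux3

lemma encard_biUnion_le' {α β : Type*} (t : Finset α) (f : α → Set β) :
    (⋃ p ∈ t, f p).encard ≤ ∑ p ∈ t, (f p).encard := by
  classical
  induction t using Finset.induction_on with
  | empty => simp
  | insert a s ha ih =>
    rw [Finset.set_biUnion_insert, Finset.sum_insert ha]
    exact le_trans (Set.encard_union_le _ _) (add_le_add le_rfl ih)

end Aux3


set_option maxHeartbeats 1000000

/-- Semicontinuity of counting functions on the punctured hull: for a relatively separated
`Λ ⊆ G`, the function `P ↦ |P ∩ U|` is lower semicontinuous on `Ω*(Λ)` for every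
precompact open identity neighborhood `U`; for every compact `K`,
`rel(Λ)·|P ∩ K| ≥ limsup_{P' → P} |P' ∩ K|`; and if `Λ` is separated then `P ↦ |P ∩ K|` is
upper semicontinuous. -/
theorem statement12 {G : Type*} [TopologicalSpace G] [Group G] [IsTopologicalGroup G]
    [T2Space G] [LocallyCompactSpace G] [SecondCountableTopology G]
    (Λ : Set G) (hΛ : RelSep Λ) :
    (∀ U : Set G, IsOpen U → (1 : G) ∈ U → IsCompact (closure U) →
      LowerSemicontinuous (fun P : ↥(phull Λ) => ((P.1.1 ∩ U).encard : ℝ≥0∞))) ∧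
    (∀ K : Set G, IsCompact K → ∀ P : ↥(phull Λ),
      Filter.limsup (fun P' : ↥(phull Λ) => ((P'.1.1 ∩ K).encard : ℝ≥0∞)) (nhds P) ≤
        relC Λ * ((P.1.1 ∩ K).encard : ℝ≥0∞)) ∧
    (Separated Λ → ∀ K : Set G, IsCompact K →
      UpperSemicontinuous (fun P : ↥(phull Λ) => ((P.1.1 ∩ K).encard : ℝ≥0∞))) := by
  classical
  have hΛfin : relC Λ ≠ ⊤ := by
    obtain ⟨U, hUo, ⟨u, hu⟩, ℓ, hℓ⟩ := hΛ
    have hmem : u⁻¹ • U ∈ nhds (1 : G) :=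
      ((hUo.smul u⁻¹).mem_nhds ⟨u, hu, by simp⟩)
    have hle : relC Λ ≤ (ℓ : ℝ≥0∞) := by
      refine le_trans (iInf₂_le _ hmem) (iSup_le fun x => ?_)
      rw [smul_smul]
      calc ((Λ ∩ (x * u⁻¹) • U).encard : ℝ≥0∞) ≤ ((ℓ : ℕ∞) : ℝ≥0∞) := by
            exact_mod_cast ENat.toENNReal_le.mpr (hℓ (x * u⁻¹))
        _ = (ℓ : ℝ≥0∞) := ENat.toENNReal_coe ℓ
    exact ne_top_of_le_ne_top (ENNReal.natCast_ne_top ℓ) hle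
  have hΛne : ∀ _ : ↥(phull Λ), Λ.Nonempty := by
    intro P
    by_contra h
    rw [Set.not_nonempty_iff_eq_empty] at h
    have hb := hull_count_le P.2.1 (isOpen_univ (X := G))
    simp only [h, Set.empty_inter, Set.encard_empty, ENat.toENNReal_zero, iSup_const,
      Set.inter_univ, nonpos_iff_eq_zero] at hb
    have : P.1.1.encard = 0 := by exact_mod_cast hb
    exact absurd P.2.2 (by simp [Set.encard_eq_zero.mp this])
  have hrel1 : ∀ _ : ↥(phull Λ), (1 : ℝ≥0∞) ≤ relC Λ := by
    intro P
    obtain ⟨l0, hl0⟩ := hΛne P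
    refine le_iInf₂ fun U hU => le_trans ?_ (le_iSup _ l0)
    have h1 : l0 ∈ Λ ∩ l0 • U := ⟨hl0, ⟨1, mem_of_mem_nhds hU, by simp⟩⟩
    have h2 : (1 : ℕ∞) ≤ (Λ ∩ l0 • U).encard := Set.one_le_encard_iff_nonempty.mpr ⟨l0, h1⟩
    exact_mod_cast ENat.toENNReal_le.mpr h2
  have part1 : ∀ U : Set G, IsOpen U →
      LowerSemicontinuous (fun P : ↥(phull Λ) => ((P.1.1 ∩ U).encard : ℝ≥0∞)) := by
    intro U hU P y hy
    dsimp only at hy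
    obtain ⟨m, hym, hme⟩ : ∃ m : ℕ, y < (m : ℝ≥0∞) ∧ (m : ℕ∞) ≤ (P.1.1 ∩ U).encard := by
      cases hE : (P.1.1 ∩ U).encard with
      | top =>
        have hyne : y ≠ ⊤ := by
          rw [hE, ENat.toENNReal_top] at hy; exact hy.ne
        obtain ⟨n, hn⟩ := ENNReal.exists_nat_gt hyne
        exact ⟨n, hn, le_top⟩
      | coe k =>
        refine ⟨k, ?_, le_rfl⟩
        rw [hE, ENat.toENNReal_coe] at hy; exact hy
    obtain ⟨O, hO, hPO, hcount⟩ := exists_fell_open_count P.1 hU m hme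
    have hmem : Subtype.val ⁻¹' O ∈ nhds P :=
      (continuous_subtype_val.continuousAt).preimage_mem_nhds (hO.mem_nhds hPO)
    filter_upwards [hmem] with P' hP'
    calc y < (m : ℝ≥0∞) := hym
      _ ≤ ((P'.1.1 ∩ U).encard : ℝ≥0∞) := by
          exact_mod_cast ENat.toENNReal_le.mpr (hcount P'.1 hP')
  have part2 : ∀ K : Set G, IsCompact K → ∀ P : ↥(phull Λ),
      Filter.limsup (fun P' : ↥(phull Λ) => ((P'.1.1 ∩ K).encard : ℝ≥0∞)) (nhds P) ≤
        relC Λ * ((P.1.1 ∩ K).encard : ℝ≥0∞) := by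
    intro K hK P
    cases hE : (P.1.1 ∩ K).encard with
    | top =>
      rw [ENat.toENNReal_top, ENNReal.mul_top]
      · exact le_top
      · intro h0
        exact absurd (hrel1 P) (by simp [h0])
    | coe n =>
      have key : ∀ c : ℝ≥0∞, relC Λ < c →
          Filter.limsup (fun P' : ↥(phull Λ) => ((P'.1.1 ∩ K).encard : ℝ≥0∞)) (nhds P) ≤
            c * n := by
        intro c hc
        rw [relC] at hc
        obtain ⟨U, hU2⟩ := iInf_lt_iff.mp hc
        obtain ⟨hUnhds, hSU⟩ := iInf_lt_iff.mp hU2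
        obtain ⟨U', hU'sub, hU'o, hU'1⟩ := mem_nhds_iff.mp hUnhds
        have hSU' : ∀ x : G, ((Λ ∩ x • U').encard : ℝ≥0∞) ≤ c := by
          intro x
          have hsub2 : Λ ∩ x • U' ⊆ Λ ∩ x • U :=
            Set.inter_subset_inter_right Λ (Set.smul_set_mono hU'sub)
          exact le_trans (ENat.toENNReal_le.mpr (Set.encard_le_encard hsub2))
            (le_trans (le_iSup (fun x : G => ((Λ ∩ x • U).encard : ℝ≥0∞)) x) hSU.le)
        have hsfin : (P.1.1 ∩ K).Finite := Set.finite_of_encard_eq_coe hE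
        set t : Finset G := hsfin.toFinset with ht
        have hcard : (t.card : ℕ∞) = (n : ℕ∞) := by
          have h := hsfin.encard_eq_coe_toFinset_card
          rw [hE] at h; exact h.symm
        set KK : Set G := K \ ⋃ p ∈ t, p • U' with hKK
        have hOopen : IsOpen {C : CF G | C.1 ∩ KK = ∅} :=
          TopologicalSpace.isOpen_generateFrom_of_mem
            (Or.inl ⟨KK, hK.diff (isOpen_biUnion fun p _ => hU'o.smul p), rfl⟩)
        have hPO : P.1 ∈ {C : CF G | C.1 ∩ KK = ∅} := by
          refine Set.eq_empty_iff_forall_notMem.mpr ?_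
          rintro q ⟨hqP, hqK, hqn⟩
          refine hqn (Set.mem_biUnion (hsfin.mem_toFinset.mpr ⟨hqP, hqK⟩) ?_)
          exact ⟨1, hU'1, by simp⟩
        have hbound : ∀ C' : CF G, C' ∈ hullSet Λ → C'.1 ∩ KK = ∅ →
            ((C'.1 ∩ K).encard : ℝ≥0∞) ≤ c * n := by
          intro C' hC'hull hC'O
          have hsub : C'.1 ∩ K ⊆ ⋃ p ∈ t, C'.1 ∩ p • U' := by
            rintro q ⟨hqC, hqK⟩
            have hq : q ∈ ⋃ p ∈ t, p • U' := by
              by_contra hq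
              exact Set.eq_empty_iff_forall_notMem.mp hC'O q ⟨hqC, hqK, hq⟩
            obtain ⟨p, hp, hqp⟩ := Set.mem_iUnion₂.mp hq
            exact Set.mem_biUnion hp ⟨hqC, hqp⟩
          have hpb : ∀ p : G, ((C'.1 ∩ p • U').encard : ℝ≥0∞) ≤ c := by
            intro p
            refine le_trans (hull_count_le hC'hull (hU'o.smul p)) (iSup_le fun x => ?_)
            rw [smul_smul]
            exact hSU' (x * p)
          calc ((C'.1 ∩ K).encard : ℝ≥0∞)
              ≤ (((⋃ p ∈ t, C'.1 ∩ p • U').encard : ℕ∞) : ℝ≥0∞) := by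
                exact_mod_cast ENat.toENNReal_le.mpr (Set.encard_le_encard hsub)
            _ ≤ ((∑ p ∈ t, (C'.1 ∩ p • U').encard : ℕ∞) : ℝ≥0∞) := by
                exact_mod_cast ENat.toENNReal_le.mpr (encard_biUnion_le' t _)
            _ = ∑ p ∈ t, ((C'.1 ∩ p • U').encard : ℝ≥0∞) :=
                map_sum ENat.toENNRealRingHom _ t
            _ ≤ ∑ _p ∈ t, c := Finset.sum_le_sum fun p _ => hpb p
            _ = t.card * c := by rw [Finset.sum_const, nsmul_eq_mul]
            _ = c * n := by
                have : t.card = n := by exact_mod_cast hcard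
                rw [this, mul_comm]
        have hmem : Subtype.val ⁻¹' {C : CF G | C.1 ∩ KK = ∅} ∈ nhds P :=
          (continuous_subtype_val.continuousAt).preimage_mem_nhds (hOopen.mem_nhds hPO)
        refine Filter.limsup_le_of_le (by isBoundedDefault) ?_
        filter_upwards [hmem] with P' hP'
        exact hbound P'.1 P'.2.1 hP'
      rw [ENat.toENNReal_coe]
      refine ENNReal.le_of_forall_pos_le_add fun ε hε _ => ?_
      rcases Nat.eq_zero_or_pos n with hn0 | hnpos
      · subst hn0
        have := key (relC Λ + 1) (ENNReal.lt_add_right hΛfin one_ne_zero)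
        simpa using le_trans this (by simp)
      · have hn0 : (n : ℝ≥0∞) ≠ 0 := by exact_mod_cast hnpos.ne'
        have hnt : (n : ℝ≥0∞) ≠ ⊤ := ENNReal.natCast_ne_top n
        have hεn : (ε : ℝ≥0∞) / n ≠ 0 := by
          simp [ENNReal.div_eq_zero_iff, hnt, hε.ne']
        have hc := key (relC Λ + (ε : ℝ≥0∞) / n) (ENNReal.lt_add_right hΛfin hεn)
        calc Filter.limsup (fun P' : ↥(phull Λ) => ((P'.1.1 ∩ K).encard : ℝ≥0∞)) (nhds P)
            ≤ (relC Λ + (ε : ℝ≥0∞) / n) * n := hc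
          _ = relC Λ * n + ((ε : ℝ≥0∞) / n) * n := by rw [add_mul]
          _ = relC Λ * n + ε := by rw [ENNReal.div_mul_cancel hn0 hnt]
  refine ⟨fun U hU _ _ => part1 U hU, part2, ?_⟩
  intro hsep K hK P y hy
  obtain ⟨U, hUo, hU1, hUsep⟩ := hsep
  have hrle : relC Λ ≤ 1 := by
    refine le_trans (iInf₂_le U (hUo.mem_nhds hU1)) (iSup_le fun x => ?_)
    exact_mod_cast ENat.toENNReal_le.mpr (hUsep x)
  have hlim : Filter.limsup (fun P' : ↥(phull Λ) => ((P'.1.1 ∩ K).encard : ℝ≥0∞)) (nhds P) ≤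
      ((P.1.1 ∩ K).encard : ℝ≥0∞) := by
    refine le_trans (part2 K hK P) ?_
    calc relC Λ * ((P.1.1 ∩ K).encard : ℝ≥0∞) ≤ 1 * ((P.1.1 ∩ K).encard : ℝ≥0∞) :=
          mul_le_mul_left hrle _
      _ = _ := one_mul _
  exact Filter.eventually_lt_of_limsup_lt (lt_of_le_of_lt hlim hy)
end

section
/- Let H be a reproducing kernel Hilbert space of functions on a unimodular lcsc group G, isometrically embedded in L²(G), invariant under σ-twisted left translations, and contained in the Wiener amalgam space W²(G). Then for a subset Λ ⊆ G, the family of kernel functions (k_λ)_{λ∈Λ} is a Bessel sequence in H if and only if Λ is relatively separated. -/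
open Pointwise Set MeasureTheory Filter Topology
open scoped ENNReal

set_option linter.unusedSectionVars false
set_option linter.unusedVariables false

variable {G : Type*} [TopologicalSpace G] [Group G] [IsTopologicalGroup G]

open scoped ComplexInnerProductSpace NNReal

section Aux

lemma aux_sum_lintegral_le {α : Type*} [MeasurableSpace α] (μ : Measure α)
    {ι : Type*} (T : Finset ι) (F : ι → α → ℝ≥0∞) :
    ∑ i ∈ T, ∫⁻ x, F i x ∂μ ≤ ∫⁻ x, ∑ i ∈ T, F i x ∂μ := by
  classical
  induction T using Finset.induction_on with
  | empty => simp
  | insert _ _ hnot ih =>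
    rename_i a s
    rw [Finset.sum_insert hnot]
    refine le_trans (add_le_add_right ih _) ?_
    refine le_trans (MeasureTheory.le_lintegral_add _ _) ?_
    refine lintegral_mono fun x => ?_
    rw [Finset.sum_insert hnot]

variable {G : Type*} [TopologicalSpace G] [Group G] [IsTopologicalGroup G]
    [T2Space G] [LocallyCompactSpace G] [SecondCountableTopology G]
    [MeasurableSpace G] [BorelSpace G]

lemma aux_inv_eq_self (m : Measure G) [m.IsHaarMeasure] [m.IsMulRightInvariant] :
    m.inv = m := by
  have hc : m.inv = Measure.haarScalarFactor m.inv m • m :=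
    Measure.isMulLeftInvariant_eq_smul m.inv m
  set c := Measure.haarScalarFactor m.inv m with hcdef
  have h2 : m = (c : ℝ≥0∞) ^ 2 • m := by
    conv_lhs => rw [← Measure.inv_inv m]
    rw [hc]
    rw [Measure.inv, Measure.map_smul, ← Measure.inv_def, hc, smul_smul, ← sq]
    norm_cast
  obtain ⟨K⟩ : Nonempty (TopologicalSpace.PositiveCompacts G) := inferInstance
  have hKpos : 0 < m K := m.measure_pos_of_nonempty_interior K.interior_nonempty
  have hKtop : m K < ⊤ := K.isCompact.measure_lt_top
  have h3 : (c : ℝ≥0∞) ^ 2 * m K = 1 ^ 2 * m K := by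
    conv_rhs => rw [h2]
    simp
  have h4 : (c : ℝ≥0∞) ^ 2 = 1 ^ 2 :=
    (ENNReal.mul_left_inj hKpos.ne' hKtop.ne).1 h3
  have h5 : (c : ℝ≥0∞) = 1 := (ENNReal.pow_right_strictMono two_ne_zero).injective h4
  rw [hc]
  rw [show c = 1 by exact_mod_cast h5, one_smul]


lemma aux_exists_compact (m : Measure G) (h : G → ℝ≥0∞)
    (hpos : 0 < ∫⁻ x, h x ∂m) :
    ∃ C : Set G, IsCompact C ∧ 0 < ∫⁻ x, C.indicator h x ∂m := by
  obtain ⟨g, hgm, hgle, hgeq⟩ := MeasureTheory.exists_measurable_le_lintegral_eq m h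
  rw [hgeq] at hpos
  let K := CompactExhaustion.choice G
  have hmono : Monotone fun n => (K n).indicator g := by
    intro i j hij x
    exact Set.indicator_le_indicator_of_subset (K.subset hij) (fun _ => zero_le) x
  have hsup : ∀ x, ⨆ n, (K n).indicator g x = g x := by
    intro x
    refine le_antisymm (iSup_le fun n => Set.indicator_le_self _ _ x) ?_
    obtain ⟨n, hn⟩ : ∃ n, x ∈ K n := ⟨K.find x, K.mem_find x⟩
    exact le_trans (le_of_eq (Set.indicator_of_mem hn g).symm) (le_iSup (fun n => (K n).indicator g x) n)
  have hint : ∫⁻ x, g x ∂m = ⨆ n, ∫⁻ x, (K n).indicator g x ∂m := by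
    rw [← lintegral_iSup (fun n => hgm.indicator ((K.isCompact n).isClosed.measurableSet))
      hmono]
    congr 1
    exact funext fun x => (hsup x).symm
  rw [hint] at hpos
  obtain ⟨n, hn⟩ : ∃ n, 0 < ∫⁻ x, (K n).indicator g x ∂m := by
    by_contra hcon
    push_neg at hcon
    simp only [le_zero_iff] at hcon
    simp [hcon] at hpos
  exact ⟨K n, K.isCompact n, lt_of_lt_of_le hn
    (lintegral_mono fun x => Set.indicator_le_indicator (hgle x))⟩


lemma aux_sq_ofReal {E : Type*} [NormedAddCommGroup E] (z : E) :
    ((‖z‖₊ : ℝ≥0∞)) ^ 2 = ENNReal.ofReal (‖z‖ ^ (2 : ℝ≥0∞).toReal) := by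
  have htR : (2 : ℝ≥0∞).toReal = (2 : ℝ) := by norm_num
  rw [htR, Real.rpow_two, ENNReal.ofReal_pow (norm_nonneg _), ofReal_norm, enorm_eq_nnnorm]

lemma aux_tsum_sq_eq {ι : Type*} (u : lp (fun _ : ι => ℂ) 2) :
    ∑' i, ((‖u i‖₊ : ℝ≥0∞)) ^ 2 = ((‖u‖₊ : ℝ≥0∞)) ^ 2 := by
  have hp : 0 < (2 : ℝ≥0∞).toReal := by norm_num
  have hsummable : Summable fun i => ‖u i‖ ^ (2 : ℝ≥0∞).toReal := (lp.memℓp u).summable hp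
  calc ∑' i, ((‖u i‖₊ : ℝ≥0∞)) ^ 2
      = ∑' i, ENNReal.ofReal (‖u i‖ ^ (2 : ℝ≥0∞).toReal) := by
        congr 1; funext i; exact aux_sq_ofReal _
    _ = ENNReal.ofReal (∑' i, ‖u i‖ ^ (2 : ℝ≥0∞).toReal) :=
        (ENNReal.ofReal_tsum_of_nonneg (fun i => Real.rpow_nonneg (norm_nonneg _) _)
          hsummable).symm
    _ = ENNReal.ofReal (‖u‖ ^ (2 : ℝ≥0∞).toReal) := by rw [← lp.norm_rpow_eq_tsum hp]
    _ = ((‖u‖₊ : ℝ≥0∞)) ^ 2 := (aux_sq_ofReal u).symm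


lemma aux_bessel_of_summable {H : Type*} [NormedAddCommGroup H] [InnerProductSpace ℂ H]
    [CompleteSpace H] {ι : Type*} (e : ι → H)
    (hsum : ∀ f : H, ∑' i, ((‖⟪f, e i⟫‖₊ : ℝ≥0∞)) ^ 2 < ⊤) :
    ∃ B : ℝ≥0∞, B ≠ ⊤ ∧ ∀ f : H,
      ∑' i, ((‖⟪f, e i⟫‖₊ : ℝ≥0∞)) ^ 2 ≤ B * ((‖f‖₊ : ℝ≥0∞)) ^ 2 := by
  classical
  have hnn : ∀ (f : H) (i : ι), ‖⟪f, e i⟫‖₊ = ‖⟪e i, f⟫‖₊ := fun f i =>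
    NNReal.eq (by simpa using norm_inner_symm (𝕜 := ℂ) f (e i))
  have hmem : ∀ f : H, Memℓp (fun i => ⟪e i, f⟫) (2 : ℝ≥0∞) := by
    intro f
    apply memℓp_gen
    have h0 : ∑' i, ((‖⟪f, e i⟫‖₊ ^ 2 : ℝ≥0) : ℝ≥0∞) ≠ ⊤ := by
      simpa [ENNReal.coe_pow] using (hsum f).ne
    have h1 : Summable fun i => ((‖⟪f, e i⟫‖₊ ^ 2 : ℝ≥0) : ℝ) :=
      NNReal.summable_coe.2 (ENNReal.tsum_coe_ne_top_iff_summable.1 h0)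
    refine h1.congr fun i => ?_
    push_cast
    rw [show (2 : ℝ≥0∞).toReal = (2 : ℝ) from by norm_num, Real.rpow_two,
      norm_inner_symm f (e i)]
  let T : H →ₗ[ℂ] lp (fun _ : ι => ℂ) 2 :=
    { toFun := fun f => ⟨fun i => ⟪e i, f⟫, hmem f⟩
      map_add' := fun f g => by
        apply lp.ext
        rw [lp.coeFn_add]
        funext i
        exact inner_add_right _ _ _
      map_smul' := fun c f => by
        apply lp.ext
        rw [lp.coeFn_smul]
        funext i
        exact inner_smul_right _ _ _ }
  have hTapp : ∀ (f : H) (i : ι), (T f : ∀ _ : ι, ℂ) i = ⟪e i, f⟫ := fun f i => rfl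
  have hcont : Continuous T := by
    apply LinearMap.continuous_of_seq_closed_graph
    intro u x y hux huy
    apply lp.ext
    funext i
    have hnorm : Tendsto (fun n => ‖T (u n) - y‖) atTop (𝓝 0) := by
      have := tendsto_iff_norm_sub_tendsto_zero.1 huy
      simpa using this
    have hb : ∀ n, ‖(T (u n) : ∀ _ : ι, ℂ) i - (y : ∀ _ : ι, ℂ) i‖ ≤ ‖T (u n) - y‖ := by
      intro n
      have := lp.norm_apply_le_norm (by norm_num : (2 : ℝ≥0∞) ≠ 0) (T (u n) - y) i
      simpa [lp.coeFn_sub] using this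
    have h1 : Tendsto (fun n => (T (u n) : ∀ _ : ι, ℂ) i) atTop (𝓝 ((y : ∀ _ : ι, ℂ) i)) := by
      rw [tendsto_iff_norm_sub_tendsto_zero]
      exact squeeze_zero (fun n => norm_nonneg _) hb hnorm
    have h2 : Tendsto (fun n => (⟪e i, u n⟫ : ℂ)) atTop (𝓝 ⟪e i, x⟫) :=
      Filter.Tendsto.inner tendsto_const_nhds hux
    have h3 : Tendsto (fun n => (T (u n) : ∀ _ : ι, ℂ) i) atTop (𝓝 (⟪e i, x⟫ : ℂ)) := by
      simpa [hTapp] using h2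
    exact tendsto_nhds_unique h1 h3
  let Tc : H →L[ℂ] lp (fun _ : ι => ℂ) 2 := ⟨T, hcont⟩
  refine ⟨((‖Tc‖₊ : ℝ≥0∞)) ^ 2, ENNReal.pow_ne_top ENNReal.coe_ne_top, fun f => ?_⟩
  calc ∑' i, ((‖⟪f, e i⟫‖₊ : ℝ≥0∞)) ^ 2
      = ∑' i, ((‖(Tc f : ∀ _ : ι, ℂ) i‖₊ : ℝ≥0∞)) ^ 2 := by
        congr 1; funext i; rw [hnn f i]; rfl
    _ = ((‖Tc f‖₊ : ℝ≥0∞)) ^ 2 := aux_tsum_sq_eq _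
    _ ≤ (((‖Tc‖₊ * ‖f‖₊ : ℝ≥0) : ℝ≥0∞)) ^ 2 := by
        gcongr
        exact_mod_cast Tc.le_opNNNorm f
    _ = ((‖Tc‖₊ : ℝ≥0∞)) ^ 2 * ((‖f‖₊ : ℝ≥0∞)) ^ 2 := by push_cast; ring

end Aux

section Main

variable {G : Type*} [TopologicalSpace G] [Group G] [IsTopologicalGroup G]
    [T2Space G] [LocallyCompactSpace G] [SecondCountableTopology G]
    [MeasurableSpace G] [BorelSpace G]

lemma aux_summable_of_relSep
    (m : Measure G) [m.IsHaarMeasure] [m.IsMulRightInvariant]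
    {H : Type*} [NormedAddCommGroup H] [InnerProductSpace ℂ H]
    (ev : G → H)
    (Q : Set G) (hQc : IsCompact Q) (hQ1 : Q ∈ nhds (1 : G))
    (hW : ∀ f : H, ∫⁻ x : G, (⨆ t ∈ x • Q, (‖⟪f, ev t⟫‖₊ : ℝ≥0∞)) ^ 2 ∂m < ⊤)
    (Λ : Set G) (hrel : RelSep Λ) (f : H) :
    ∑' lam : ↥Λ, ((‖⟪f, ev (↑lam : G)⟫‖₊ : ℝ≥0∞)) ^ 2 < ⊤ := by
  classical
  obtain ⟨U, hUopen, ⟨u₀, hu₀⟩, ℓ, hℓ⟩ := hrel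
  set V : Set G := (u₀⁻¹ • U) ∩ interior Q with hVdef
  have hVopen : IsOpen V := (hUopen.smul u₀⁻¹).inter isOpen_interior
  have hV1 : (1 : G) ∈ V := by
    constructor
    · exact ⟨u₀, hu₀, by simp⟩
    · exact mem_interior_iff_mem_nhds.mpr hQ1
  have hVQ : V ⊆ Q := fun x hx => interior_subset hx.2
  have hcount : ∀ x : G, (Λ ∩ x • V).encard ≤ ℓ := by
    intro x
    refine le_trans (Set.encard_le_encard ?_) (hℓ (x * u₀⁻¹))
    refine Set.inter_subset_inter_right _ ?_
    intro y hy
    have : y ∈ x • u₀⁻¹ • U := Set.smul_set_mono Set.inter_subset_left hy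
    rwa [smul_smul] at this
  -- basic measure facts about V⁻¹
  have hVinv_open : IsOpen (V⁻¹ : Set G) := hVopen.inv
  have hmV0 : 0 < m (V⁻¹ : Set G) := hVinv_open.measure_pos m ⟨1, by simpa using hV1⟩
  have hmVtop : m (V⁻¹ : Set G) < ⊤ := by
    refine lt_of_le_of_lt (measure_mono (Set.inv_subset_inv.2 hVQ)) ?_
    exact hQc.inv.measure_lt_top
  set c : G → ℝ≥0∞ := fun y => ((‖⟪f, ev y⟫‖₊ : ℝ≥0∞)) ^ 2 with hcdef
  set S : G → ℝ≥0∞ := fun x => (⨆ t ∈ x • Q, (‖⟪f, ev t⟫‖₊ : ℝ≥0∞)) ^ 2 with hSdef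
  have hkey : ∀ T : Finset G, ↑T ⊆ Λ →
      (∑ lam ∈ T, c lam) * m (V⁻¹ : Set G) ≤ (ℓ : ℝ≥0∞) * ∫⁻ x, S x ∂m := by
    intro T hT
    have hmeas : ∀ lam : G, MeasurableSet (lam • (V⁻¹ : Set G)) :=
      fun lam => (hVinv_open.smul lam).measurableSet
    have hpoint : ∀ x : G,
        (∑ lam ∈ T, (lam • (V⁻¹ : Set G)).indicator (fun _ => c lam) x)
          ≤ (ℓ : ℝ≥0∞) * S x := by
      intro x
      set P : Finset G := T.filter (fun lam => x ∈ lam • (V⁻¹ : Set G)) with hPdef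
      have hsum : (∑ lam ∈ T, (lam • (V⁻¹ : Set G)).indicator (fun _ => c lam) x)
          = ∑ lam ∈ P, c lam := by
        simp only [hPdef, Finset.sum_filter, Set.indicator_apply]
      have hPmem : ∀ lam ∈ P, lam ∈ Λ ∩ x • V := by
        intro lam hlam
        rw [hPdef, Finset.mem_filter] at hlam
        refine ⟨hT hlam.1, ?_⟩
        obtain ⟨w, hw, hxw⟩ := hlam.2
        refine ⟨w⁻¹, by simpa using hw, ?_⟩
        simp only [smul_eq_mul] at hxw ⊢
        rw [← hxw]
        group
      have hPcard : (P.card : ℕ) ≤ ℓ := by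
        have h1 : ((P : Set G)).encard ≤ (Λ ∩ x • V).encard :=
          Set.encard_le_encard (fun lam hlam => hPmem lam hlam)
        rw [Set.encard_coe_eq_coe_finsetCard] at h1
        exact_mod_cast h1.trans (hcount x)
      have hterm : ∀ lam ∈ P, c lam ≤ S x := by
        intro lam hlam
        have hmem : lam ∈ x • Q := Set.smul_set_mono hVQ (hPmem lam hlam).2
        have : (‖⟪f, ev lam⟫‖₊ : ℝ≥0∞) ≤ ⨆ t ∈ x • Q, (‖⟪f, ev t⟫‖₊ : ℝ≥0∞) := by
          refine le_iSup₂ (f := fun t (_ : t ∈ x • Q) => ((‖⟪f, ev t⟫‖₊ : ℝ≥0∞))) lam hmem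
        rw [hcdef, hSdef]
        exact pow_le_pow_left' this 2
      calc (∑ lam ∈ T, (lam • (V⁻¹ : Set G)).indicator (fun _ => c lam) x)
          = ∑ lam ∈ P, c lam := hsum
        _ ≤ P.card • S x := Finset.sum_le_card_nsmul P _ (S x) hterm
        _ = (P.card : ℝ≥0∞) * S x := by rw [nsmul_eq_mul]
        _ ≤ (ℓ : ℝ≥0∞) * S x :=
            mul_le_mul_left (by exact_mod_cast hPcard) _
    calc (∑ lam ∈ T, c lam) * m (V⁻¹ : Set G)
        = ∑ lam ∈ T, c lam * m (lam • (V⁻¹ : Set G)) := by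
          rw [Finset.sum_mul]
          congr 1
          funext lam
          rw [measure_smul]
      _ = ∑ lam ∈ T, ∫⁻ x, (lam • (V⁻¹ : Set G)).indicator (fun _ => c lam) x ∂m := by
          congr 1
          funext lam
          rw [lintegral_indicator_const (hmeas lam)]
      _ ≤ ∫⁻ x, ∑ lam ∈ T, (lam • (V⁻¹ : Set G)).indicator (fun _ => c lam) x ∂m :=
          aux_sum_lintegral_le m T _
      _ ≤ ∫⁻ x, (ℓ : ℝ≥0∞) * S x ∂m := lintegral_mono hpoint
      _ = (ℓ : ℝ≥0∞) * ∫⁻ x, S x ∂m :=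
          lintegral_const_mul' _ _ (ENNReal.natCast_ne_top ℓ)
  -- conclude
  have hbound : ∑' lam : ↥Λ, c ↑lam
      ≤ ((ℓ : ℝ≥0∞) * ∫⁻ x, S x ∂m) / m (V⁻¹ : Set G) := by
    rw [ENNReal.tsum_eq_iSup_sum]
    refine iSup_le fun s => ?_
    rw [ENNReal.le_div_iff_mul_le (Or.inl hmV0.ne') (Or.inl hmVtop.ne)]
    have himg : (∑ lam ∈ s, c ↑lam) = ∑ lam ∈ s.image Subtype.val, c lam := by
      rw [Finset.sum_image]
      intro a _ b _ hab
      exact Subtype.ext hab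
    rw [himg]
    refine hkey _ ?_
    intro y hy
    simp only [Finset.coe_image, Set.mem_image] at hy
    obtain ⟨lam, _, rfl⟩ := hy
    exact lam.2
  refine lt_of_le_of_lt hbound ?_
  exact ENNReal.div_lt_top
    (ENNReal.mul_ne_top (ENNReal.natCast_ne_top ℓ) (hW f).ne) hmV0.ne'

lemma aux_relSep_of_bessel
    (m : Measure G) [m.IsHaarMeasure] [m.IsMulRightInvariant]
    {H : Type*} [NormedAddCommGroup H] [InnerProductSpace ℂ H] [Nontrivial H]
    (ev : G → H) (σ : G → G → ℂ)
    (hσnorm : ∀ x y : G, ‖σ x y‖ = 1)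
    (hiso : ∀ f : H, ∫⁻ x : G, ((‖⟪f, ev x⟫‖₊ : ℝ≥0∞)) ^ 2 ∂m = (‖f‖₊ : ℝ≥0∞) ^ 2)
    (hinv : ∀ (x : G) (f : H), ∃ g : H, ∀ y : G,
      ⟪g, ev y⟫ = σ x (x⁻¹ * y) * ⟪f, ev (x⁻¹ * y)⟫)
    (Λ : Set G) (B : ℝ≥0∞) (hBne : B ≠ ⊤)
    (hB : ∀ f : H, ∑' lam : ↥Λ, ((‖⟪f, ev (↑lam : G)⟫‖₊ : ℝ≥0∞)) ^ 2
      ≤ B * (‖f‖₊ : ℝ≥0∞) ^ 2) :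
    RelSep Λ := by
  classical
  obtain ⟨f₀, hf₀⟩ := exists_ne (0 : H)
  set h : G → ℝ≥0∞ := fun y => ((‖⟪f₀, ev y⟫‖₊ : ℝ≥0∞)) ^ 2 with hhdef
  have hf₀norm : (0 : ℝ≥0∞) < ((‖f₀‖₊ : ℝ≥0∞)) ^ 2 := by
    have : (‖f₀‖₊ : ℝ≥0∞) ≠ 0 := by
      simpa [nnnorm_eq_zero] using hf₀
    positivity
  have hf₀top : ((‖f₀‖₊ : ℝ≥0∞)) ^ 2 ≠ ⊤ := ENNReal.pow_ne_top ENNReal.coe_ne_top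
  -- left translation invariance in convenient form
  have hmapl : ∀ x : G, Measure.map (⇑(MeasurableEquiv.mulLeft x)) m = m := by
    intro x
    rw [MeasurableEquiv.coe_mulLeft]
    exact MeasureTheory.map_mul_left_eq_self m x
  -- inversion invariance
  have hmapinv : Measure.map (⇑(MeasurableEquiv.inv G)) m = m := by
    rw [show ⇑(MeasurableEquiv.inv G) = (Inv.inv : G → G) from rfl, ← Measure.inv_def,
      aux_inv_eq_self m]
  have hintinv : ∫⁻ w, h w⁻¹ ∂m = ∫⁻ y, h y ∂m := by
    conv_rhs => rw [← hmapinv]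
    exact (lintegral_map_equiv h (MeasurableEquiv.inv G)).symm
  have hpos' : 0 < ∫⁻ w, h w⁻¹ ∂m := by
    rw [hintinv, hhdef]
    rw [hiso f₀]
    exact hf₀norm
  obtain ⟨C, hCcomp, hCpos⟩ := aux_exists_compact m (fun w => h w⁻¹) hpos'
  set c : ℝ≥0∞ := ∫⁻ w, C.indicator (fun w => h w⁻¹) w ∂m with hcdef
  have hc0 : 0 < c := hCpos
  have hcT : c < ⊤ := by
    refine lt_of_le_of_lt (lintegral_mono fun w => Set.indicator_le_self _ _ w) ?_
    rw [hintinv, hhdef, hiso f₀]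
    exact hf₀top.lt_top
  obtain ⟨Kc, hKccomp, hKcnhds⟩ := exists_compact_mem_nhds (1 : G)
  set U : Set G := interior Kc with hUdef
  have hUopen : IsOpen U := isOpen_interior
  have hU1 : (1 : G) ∈ U := mem_interior_iff_mem_nhds.mpr hKcnhds
  set R₀ : Set G := U * C with hRdef
  have hR₀open : IsOpen R₀ := hUopen.mul_right
  have hmR₀ : m R₀ < ⊤ := by
    refine lt_of_le_of_lt (measure_mono (Set.mul_subset_mul interior_subset subset_rfl)) ?_
    exact (hKccomp.mul hCcomp).measure_lt_top
  set M : ℝ≥0∞ := B * ((‖f₀‖₊ : ℝ≥0∞)) ^ 2 * m R₀ with hMdef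
  have hMne : M ≠ ⊤ := ENNReal.mul_ne_top (ENNReal.mul_ne_top hBne hf₀top) hmR₀.ne
  set ℓ : ℕ := ⌊(M / c).toReal⌋₊ with hldef
  refine ⟨U, hUopen, ⟨1, hU1⟩, ℓ, fun x₀ => ?_⟩
  by_contra hcon
  push_neg at hcon
  have hk : ((ℓ + 1 : ℕ) : ℕ∞) ≤ (Λ ∩ x₀ • U).encard := by
    push_cast
    exact Order.add_one_le_of_lt hcon
  obtain ⟨Tset, hTsub, hTcard⟩ := Set.exists_subset_encard_eq hk
  have hTfin : Tset.Finite := Set.finite_of_encard_eq_coe hTcard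
  set T : Finset G := hTfin.toFinset with hTdef
  have hTco : (T : Set G) = Tset := Set.Finite.coe_toFinset hTfin
  have hTcard' : T.card = ℓ + 1 := by
    have : ((T : Set G)).encard = ((ℓ + 1 : ℕ) : ℕ∞) := by rw [hTco]; exact hTcard
    rw [Set.encard_coe_eq_coe_finsetCard] at this
    exact_mod_cast this
  set a : G → G → ℝ≥0∞ := fun lam x => (lam • C).indicator (fun x => h (x⁻¹ * lam)) x
    with hadef
  have hlint : ∀ lam : G, ∫⁻ x, a lam x ∂m = c := by
    intro lam
    calc ∫⁻ x, a lam x ∂m = ∫⁻ w, a lam (lam * w) ∂m := by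
          conv_lhs => rw [← hmapl lam]
          exact lintegral_map_equiv (a lam) (MeasurableEquiv.mulLeft lam)
      _ = ∫⁻ w, C.indicator (fun w => h w⁻¹) w ∂m := by
          congr 1
          funext w
          by_cases hw : w ∈ C
          · have h1 : lam * w ∈ lam • C := ⟨w, hw, rfl⟩
            simp only [hadef, Set.indicator_of_mem h1, Set.indicator_of_mem hw]
            congr 1
            group
          · have h1 : lam * w ∉ lam • C := by
              intro hc2
              obtain ⟨v, hv, he⟩ := hc2
              have hvw : v = w := mul_left_cancel (he : lam * v = lam * w)
              exact hw (hvw ▸ hv)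
            simp only [hadef, Set.indicator_of_notMem h1, Set.indicator_of_notMem hw]
      _ = c := rfl
  -- norms of twisted translates
  have hgen : ∀ x : G, ∀ g : H,
      (∀ y : G, ⟪g, ev y⟫ = σ x (x⁻¹ * y) * ⟪f₀, ev (x⁻¹ * y)⟫) →
      (∀ y : G, ((‖⟪g, ev y⟫‖₊ : ℝ≥0∞)) ^ 2 = h (x⁻¹ * y)) ∧
        ((‖g‖₊ : ℝ≥0∞)) ^ 2 = ((‖f₀‖₊ : ℝ≥0∞)) ^ 2 := by
    intro x g hg
    have hval : ∀ y : G, ((‖⟪g, ev y⟫‖₊ : ℝ≥0∞)) ^ 2 = h (x⁻¹ * y) := by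
      intro y
      rw [hhdef]
      simp only
      rw [hg y]
      have hσ1 : ‖σ x (x⁻¹ * y)‖₊ = 1 := NNReal.eq (by simpa using hσnorm x (x⁻¹ * y))
      rw [nnnorm_mul, hσ1, one_mul]
    refine ⟨hval, ?_⟩
    rw [← hiso g, ← hiso f₀]
    calc ∫⁻ y, ((‖⟪g, ev y⟫‖₊ : ℝ≥0∞)) ^ 2 ∂m = ∫⁻ y, h (x⁻¹ * y) ∂m := by
          congr 1
          funext y
          exact hval y
      _ = ∫⁻ w, h (x⁻¹ * (x * w)) ∂m := by
          conv_lhs => rw [← hmapl x]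
          exact lintegral_map_equiv (fun y => h (x⁻¹ * y)) (MeasurableEquiv.mulLeft x)
      _ = ∫⁻ w, ((‖⟪f₀, ev w⟫‖₊ : ℝ≥0∞)) ^ 2 ∂m := by
          congr 1
          funext w
          rw [show x⁻¹ * (x * w) = w by group, hhdef]
  -- pointwise bound
  have hpoint : ∀ x : G, (∑ lam ∈ T, a lam x)
      ≤ (x₀ • R₀).indicator (fun _ => B * ((‖f₀‖₊ : ℝ≥0∞)) ^ 2) x := by
    intro x
    by_cases hx : x ∈ x₀ • R₀
    · rw [Set.indicator_of_mem hx]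
      obtain ⟨g, hg⟩ := hinv x f₀
      obtain ⟨hval, hnrm⟩ := hgen x g hg
      calc ∑ lam ∈ T, a lam x
          ≤ ∑ lam ∈ T, h (x⁻¹ * lam) :=
            Finset.sum_le_sum fun lam _ => Set.indicator_le_self _ _ x
        _ = ∑ lam ∈ T, ((‖⟪g, ev lam⟫‖₊ : ℝ≥0∞)) ^ 2 :=
            Finset.sum_congr rfl fun lam _ => (hval lam).symm
        _ ≤ ∑' lam : ↥Λ, ((‖⟪g, ev (↑lam : G)⟫‖₊ : ℝ≥0∞)) ^ 2 := by
            rw [tsum_subtype Λ (fun y => ((‖⟪g, ev y⟫‖₊ : ℝ≥0∞)) ^ 2)]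
            refine le_trans (le_of_eq (Finset.sum_congr rfl fun lam hlam => ?_))
              (ENNReal.sum_le_tsum T)
            have hlamΛ : lam ∈ Λ := by
              have : lam ∈ Tset := by rw [← hTco]; exact_mod_cast hlam
              exact (hTsub this).1
            rw [Set.indicator_of_mem hlamΛ]
        _ ≤ B * ((‖g‖₊ : ℝ≥0∞)) ^ 2 := hB g
        _ = B * ((‖f₀‖₊ : ℝ≥0∞)) ^ 2 := by rw [hnrm]
    · rw [Set.indicator_of_notMem hx]
      have hzero : ∀ lam ∈ T, a lam x = 0 := by
        intro lam hlam
        refine Set.indicator_of_notMem (fun hmem => hx ?_) _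
        have hlamU : lam ∈ x₀ • U := by
          have : lam ∈ Tset := by rw [← hTco]; exact_mod_cast hlam
          exact (hTsub this).2
        obtain ⟨u, hu, hxu⟩ := hlamU
        obtain ⟨k, hk, hxk⟩ := hmem
        refine ⟨u * k, Set.mul_mem_mul hu hk, ?_⟩
        simp only [smul_eq_mul] at hxu hxk ⊢
        rw [← hxk, ← hxu]
        group
      rw [Finset.sum_congr rfl hzero]
      simp
  have hchain : ((ℓ + 1 : ℕ) : ℝ≥0∞) * c ≤ M := by
    calc ((ℓ + 1 : ℕ) : ℝ≥0∞) * c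
        = ∑ lam ∈ T, ∫⁻ x, a lam x ∂m := by
          rw [Finset.sum_congr rfl fun lam _ => hlint lam, Finset.sum_const, hTcard',
            nsmul_eq_mul]
      _ ≤ ∫⁻ x, ∑ lam ∈ T, a lam x ∂m := aux_sum_lintegral_le m T _
      _ ≤ ∫⁻ x, (x₀ • R₀).indicator (fun _ => B * ((‖f₀‖₊ : ℝ≥0∞)) ^ 2) x ∂m :=
          lintegral_mono hpoint
      _ = B * ((‖f₀‖₊ : ℝ≥0∞)) ^ 2 * m (x₀ • R₀) :=
          lintegral_indicator_const (hR₀open.smul x₀).measurableSet _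
      _ = M := by rw [hMdef, measure_smul]
  have hle : ((ℓ + 1 : ℕ) : ℝ≥0∞) ≤ M / c :=
    (ENNReal.le_div_iff_mul_le (Or.inl hc0.ne') (Or.inl hcT.ne)).2 hchain
  have hfin : M / c ≠ ⊤ := (ENNReal.div_lt_top hMne hc0.ne').ne
  have hreal : ((ℓ + 1 : ℕ) : ℝ) ≤ (M / c).toReal := by
    have := ENNReal.toReal_mono hfin hle
    rwa [ENNReal.toReal_natCast] at this
  have hfl : (M / c).toReal < ℓ + 1 := Nat.lt_floor_add_one _
  push_cast at hreal
  linarith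

end Main



/-- Let `H` be a (nontrivial) reproducing kernel Hilbert space of functions on a unimodular
lcsc group `G`, realized through its kernel vectors `ev x = k_x` (so the function associated
to `f ∈ H` is `x ↦ ⟪f, k_x⟫`), with a continuous 2-cocycle `σ`. Assume:
(a) the embedding into `L²(G)` is isometric: `∫ |⟪f, k_x⟫|² dx = ‖f‖²`;
(b) `σ`-twisted `G`-invariance: every twisted translate of a member of `H` is in `H`;
(c) localization: every member of `H` lies in the Wiener amalgam space `W²(G)`.
Then `(k_λ)_{λ∈Λ}` is a Bessel sequence in `H` if and only if `Λ` is relatively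
separated. -/
theorem statement15 {G : Type*} [TopologicalSpace G] [Group G] [IsTopologicalGroup G]
    [T2Space G] [LocallyCompactSpace G] [SecondCountableTopology G]
    [MeasurableSpace G] [BorelSpace G]
    (m : Measure G) [m.IsHaarMeasure] [m.IsMulRightInvariant]
    {H : Type*} [NormedAddCommGroup H] [InnerProductSpace ℂ H] [CompleteSpace H]
    [Nontrivial H]
    (ev : G → H) (σ : G → G → ℂ)
    (hσnorm : ∀ x y : G, ‖σ x y‖ = 1)
    (hσcont : Continuous fun p : G × G => σ p.1 p.2)
    (hσcocycle : ∀ x y z : G, σ x y * σ (x * y) z = σ x (y * z) * σ y z)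
    (hσe : σ 1 1 = 1)
    (hiso : ∀ f : H, ∫⁻ x : G, ((‖⟪f, ev x⟫‖₊ : ℝ≥0∞)) ^ 2 ∂m = (‖f‖₊ : ℝ≥0∞) ^ 2)
    (hinv : ∀ (x : G) (f : H), ∃ g : H, ∀ y : G,
      ⟪g, ev y⟫ = σ x (x⁻¹ * y) * ⟪f, ev (x⁻¹ * y)⟫)
    (Q : Set G) (hQc : IsCompact Q) (hQ1 : Q ∈ nhds (1 : G))
    (hW : ∀ f : H,
      ∫⁻ x : G, (⨆ t ∈ x • Q, (‖⟪f, ev t⟫‖₊ : ℝ≥0∞)) ^ 2 ∂m < ⊤)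
    (Λ : Set G) :
    (∃ B : ℝ≥0∞, B ≠ ⊤ ∧ ∀ f : H,
        ∑' lam : ↥Λ, ((‖⟪f, ev (↑lam : G)⟫‖₊ : ℝ≥0∞)) ^ 2 ≤ B * (‖f‖₊ : ℝ≥0∞) ^ 2) ↔
      RelSep Λ := by
  constructor
  · rintro ⟨B, hBne, hB⟩
    exact aux_relSep_of_bessel m ev σ hσnorm hiso hinv Λ B hBne hB
  · intro hrel
    exact aux_bessel_of_summable (fun lam : ↥Λ => ev ↑lam)
      (fun f => aux_summable_of_relSep m ev Q hQc hQ1 hW Λ hrel f)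
end
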